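/- arXiv:2201.03042 — 7 statements merged into one kernel-verified Lean document; each statement's English description precedes it below -/
import Mathlib

section
/- Let V be a real M×N matrix (M ≥ N ≥ 1) of full column rank N, let G(w) := Vᵀ·diag(w)·V for w ∈ ℝ^M, and let E(w) := −(1/N)·log(det G(w)) + Σᵢ wᵢ on the set where det G(w) > 0. Then a vector w* with nonnegative entries and Σᵢ w*ᵢ = 1 maximizes det G(w) over the simplex {w ∈ ℝ^M : wᵢ ≥ 0 for all i, Σᵢ wᵢ = 1} if and only if w* minimizes E over the nonnegative orthant {w ∈ ℝ^M : wᵢ ≥ 0 for all i}. -/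
open Matrix

private lemma detG_smul {M N : ℕ} (V : Matrix (Fin M) (Fin N) ℝ)
    (G : (Fin M → ℝ) → Matrix (Fin N) (Fin N) ℝ)
    (hG : ∀ w, G w = Vᵀ * diagonal w * V) (c : ℝ) (w : Fin M → ℝ) :
    (G (c • w)).det = c ^ N * (G w).det := by
  rw [hG, hG, diagonal_smul, Matrix.mul_smul, Matrix.smul_mul, det_smul, Fintype.card_fin]

theorem stmt_0 (M N : ℕ) (hN : 0 < N) (hMN : N ≤ M)
    (V : Matrix (Fin M) (Fin N) ℝ) (hV : V.rank = N)
    (G : (Fin M → ℝ) → Matrix (Fin N) (Fin N) ℝ)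
    (hG : ∀ w, G w = Vᵀ * diagonal w * V)
    (E : (Fin M → ℝ) → ℝ)
    (hE : ∀ w, E w = -(1 / (N : ℝ)) * Real.log (G w).det + ∑ i, w i)
    (w₀ : Fin M → ℝ) (hw₀pos : ∀ i, 0 ≤ w₀ i) (hw₀mass : ∑ i, w₀ i = 1) :
    IsMaxOn (fun w => (G w).det) {w | (∀ i, 0 ≤ w i) ∧ ∑ i, w i = 1} w₀ ↔
      (0 < (G w₀).det ∧
        IsMinOn E {w | (∀ i, 0 ≤ w i) ∧ 0 < (G w).det} w₀) := by
  have hM : 0 < M := lt_of_lt_of_le hN hMN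
  have hNe : Nonempty (Fin N) := ⟨⟨0, hN⟩⟩
  -- V has injective mulVec
  have hker : LinearMap.ker V.mulVecLin = ⊥ := by
    have h1 := V.mulVecLin.finrank_range_add_finrank_ker
    rw [show Module.finrank ℝ (Fin N → ℝ) = N by simp] at h1
    have hr : Module.finrank ℝ (LinearMap.range V.mulVecLin) = N := hV
    rw [hr] at h1
    have : Module.finrank ℝ (LinearMap.ker V.mulVecLin) = 0 := by omega
    exact Submodule.finrank_eq_zero.mp this
  have hVinj : ∀ x : Fin N → ℝ, V *ᵥ x = 0 → x = 0 := by
    intro x hx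
    have := LinearMap.ker_eq_bot.mp hker
    exact this (by simpa [Matrix.mulVecLin_apply] using hx)
  -- VᵀV is positive definite
  have hPD : (Vᵀ * V).PosDef := by
    refine Matrix.PosDef.of_dotProduct_mulVec_pos (by simp [Matrix.IsHermitian, Matrix.transpose_mul]) fun x hx => ?_
    have hcalc : star x ⬝ᵥ (Vᵀ * V) *ᵥ x = (V *ᵥ x) ⬝ᵥ (V *ᵥ x) := by
      rw [star_trivial, ← Matrix.mulVec_mulVec, Matrix.dotProduct_mulVec,
        Matrix.vecMul_transpose]
    rw [hcalc]
    have hVx : V *ᵥ x ≠ 0 := fun h => hx (hVinj x h)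
    have := dotProduct_self_eq_zero (v := V *ᵥ x)
    have hnn : 0 ≤ (V *ᵥ x) ⬝ᵥ (V *ᵥ x) := Finset.sum_nonneg fun i _ => mul_self_nonneg _
    rcases hnn.lt_or_eq with h | h
    · exact h
    · exact absurd (dotProduct_self_eq_zero.mp h.symm) hVx
  have hdetVV : 0 < (Vᵀ * V).det := hPD.det_pos
  -- uniform point
  set u : Fin M → ℝ := fun _ => (M : ℝ)⁻¹ with hu
  have hMpos : (0 : ℝ) < M := by exact_mod_cast hM
  have huset : (∀ i, 0 ≤ u i) ∧ ∑ i, u i = 1 := by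
    constructor
    · intro i; positivity
    · simp [hu, Finset.sum_const, Finset.card_fin]
      field_simp
  have hGdetu : 0 < (G u).det := by
    have : u = (M : ℝ)⁻¹ • (fun _ => (1 : ℝ)) := by funext i; simp [hu]
    rw [this, detG_smul V G hG]
    have : G (fun _ => (1 : ℝ)) = Vᵀ * V := by
      rw [hG]; simp [Matrix.diagonal_one]
    rw [this]
    positivity
  constructor
  · -- max on simplex → (det > 0 ∧ min of E)
    intro hmax
    have hw₀det : 0 < (G w₀).det := lt_of_lt_of_le hGdetu (hmax huset)
    refine ⟨hw₀det, ?_⟩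
    rw [isMinOn_iff]
    intro w hw
    obtain ⟨hwpos, hwdet⟩ := hw
    set s := ∑ i, w i with hs
    have hs0 : 0 < s := by
      rcases (Finset.sum_nonneg fun i _ => hwpos i).lt_or_eq with h | h
      · exact h
      · exfalso
        have hw0 : w = 0 := by
          funext i
          exact le_antisymm (by
            have := Finset.sum_eq_zero_iff_of_nonneg (fun i _ => hwpos i) |>.mp h.symm
            exact le_of_eq (this i (Finset.mem_univ i))) (hwpos i)
        rw [hw0] at hwdet
        have : G 0 = 0 := by
          rw [hG, show (0 : Fin M → ℝ) = fun _ => (0:ℝ) from rfl, Matrix.diagonal_zero,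
            Matrix.mul_zero, Matrix.zero_mul]
        rw [this, Matrix.det_zero] at hwdet
        exact lt_irrefl 0 hwdet
    -- scaled point
    set v := s⁻¹ • w with hvdef
    have hvset : (∀ i, 0 ≤ v i) ∧ ∑ i, v i = 1 := by
      constructor
      · intro i; exact mul_nonneg (inv_nonneg.mpr hs0.le) (hwpos i)
      · simp only [hvdef, Pi.smul_apply, smul_eq_mul, ← Finset.mul_sum, ← hs]
        field_simp
    have hw_eq : (G w).det = s ^ N * (G v).det := by
      have : w = s • v := by
        rw [hvdef, smul_smul, mul_inv_cancel₀ hs0.ne', one_smul]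
      rw [this, detG_smul V G hG]
    have hvle : (G v).det ≤ (G w₀).det := hmax hvset
    have hwdet' : (G w).det ≤ s ^ N * (G w₀).det := by
      rw [hw_eq]
      exact mul_le_mul_of_nonneg_left hvle (by positivity)
    have hNpos : (0 : ℝ) < N := by exact_mod_cast hN
    have hlog : Real.log (G w).det ≤ N * Real.log s + Real.log (G w₀).det := by
      calc Real.log (G w).det ≤ Real.log (s ^ N * (G w₀).det) :=
            Real.log_le_log hwdet hwdet'
        _ = N * Real.log s + Real.log (G w₀).det := by
            rw [Real.log_mul (by positivity) hw₀det.ne', Real.log_pow]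
    have hlogs : Real.log s ≤ s - 1 := Real.log_le_sub_one_of_pos hs0
    rw [hE, hE, hw₀mass]
    have key : -(1 / (N:ℝ)) * Real.log (G w₀).det + 1 ≤ -(1 / (N:ℝ)) * Real.log (G w).det + s := by
      have h1 : -(1 / (N:ℝ)) * Real.log (G w).det ≥
          -(1 / (N:ℝ)) * (N * Real.log s + Real.log (G w₀).det) := by
        apply mul_le_mul_of_nonpos_left hlog
        simp only [neg_nonpos]
        positivity
      have h2 : -(1 / (N:ℝ)) * (N * Real.log s + Real.log (G w₀).det)
          = -Real.log s + -(1 / (N:ℝ)) * Real.log (G w₀).det := by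
        field_simp; ring
      nlinarith [h1, h2, hlogs]
    linarith [key]
  · -- min of E → max on simplex
    rintro ⟨hw₀det, hmin⟩
    rw [isMaxOn_iff]
    intro w hw
    obtain ⟨hwpos, hwmass⟩ := hw
    by_cases hdw : 0 < (G w).det
    · have hEle : E w₀ ≤ E w := hmin ⟨hwpos, hdw⟩
      rw [hE, hE, hw₀mass, hwmass] at hEle
      have hNpos : (0 : ℝ) < N := by exact_mod_cast hN
      have hlog : Real.log (G w).det ≤ Real.log (G w₀).det := by
        have h := hEle
        have hc : -(1 / (N:ℝ)) * Real.log (G w₀).det ≤ -(1 / (N:ℝ)) * Real.log (G w).det := by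
          linarith
        have hpos : (0:ℝ) < 1 / (N:ℝ) := by positivity
        nlinarith [hc]
      exact (Real.log_le_log_iff hdw hw₀det).mp hlog
    · exact le_trans (not_lt.mp hdw) hw₀det.le
end

section
/- Let V be a real M×N matrix (M ≥ N ≥ 1) of full column rank N, G(w) := Vᵀ·diag(w)·V, E(w) := −(1/N)·log(det G(w)) + Σᵢ wᵢ, and F(z) := E(z²) where (z²)ᵢ := zᵢ². Then z* ∈ ℝ^M minimizes F over ℝ^M if and only if the vector w* := (z*)² (with w*ᵢ = (z*ᵢ)²) maximizes det G(w) over the simplex {w ∈ ℝ^M : wᵢ ≥ 0 for all i, Σᵢ wᵢ = 1}; in particular any minimizer z* of F satisfies Σᵢ (z*ᵢ)² = 1. -/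
open Matrix

lemma aux_psd_det_nonneg {n : Type*} [Fintype n] [DecidableEq n] {A : Matrix n n ℝ}
    (hA : A.PosSemidef) : 0 ≤ A.det := by
  rw [hA.1.det_eq_prod_eigenvalues]
  exact Finset.prod_nonneg fun i _ => by simpa using hA.eigenvalues_nonneg i

lemma aux_gram_psd {M N : ℕ} (V : Matrix (Fin M) (Fin N) ℝ) (w : Fin M → ℝ)
    (hw : ∀ i, 0 ≤ w i) : (Vᵀ * diagonal w * V).PosSemidef := by
  set u : Fin M → ℝ := fun i => Real.sqrt (w i) with hu
  have hd : diagonal u * diagonal u = diagonal w := by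
    rw [diagonal_mul_diagonal]
    have : (fun i => u i * u i) = w := funext fun i => Real.mul_self_sqrt (hw i)
    rw [this]
  have key : Vᵀ * diagonal w * V = (diagonal u * V)ᴴ * (diagonal u * V) := by
    rw [conjTranspose_eq_transpose_of_trivial, transpose_mul, diagonal_transpose, ← hd]
    simp only [Matrix.mul_assoc]
  rw [key]
  exact posSemidef_conjTranspose_mul_self _

lemma aux_det_scale {M N : ℕ} (V : Matrix (Fin M) (Fin N) ℝ) (c : ℝ) (w : Fin M → ℝ) :
    (Vᵀ * diagonal (fun i => c * w i) * V).det = c ^ N * (Vᵀ * diagonal w * V).det := by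
  have h1 : (fun i => c * w i) = c • w := by funext i; simp
  rw [h1, diagonal_smul, Matrix.mul_smul, Matrix.smul_mul, det_smul, Fintype.card_fin]

lemma aux_gram_det_pos {M N : ℕ} (V : Matrix (Fin M) (Fin N) ℝ) (hV : V.rank = N) :
    0 < (Vᵀ * V).det := by
  have hr : (Vᵀ * V).rank = N := by rw [rank_transpose_mul_self, hV]
  have hsurj : Function.Surjective (Vᵀ * V).mulVec := by
    have htop : LinearMap.range (Vᵀ * V).mulVecLin = ⊤ := by
      apply Submodule.eq_top_of_finrank_eq
      rw [← Matrix.rank, hr]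
      simp [Module.finrank_pi]
    have h := LinearMap.range_eq_top.mp htop
    intro y
    obtain ⟨x, hx⟩ := h y
    exact ⟨x, by simpa [← Matrix.mulVec_mulVec, Matrix.mulVec_transpose] using hx⟩
  have hu : IsUnit (Vᵀ * V) := mulVec_surjective_iff_isUnit.mp hsurj
  have hne : (Vᵀ * V).det ≠ 0 := by
    have := (isUnit_iff_isUnit_det _).mp hu
    exact this.ne_zero
  have hnn : 0 ≤ (Vᵀ * V).det := by
    have : (Vᵀ * diagonal (fun _ : Fin M => (1:ℝ)) * V).PosSemidef :=
      aux_gram_psd V _ (fun _ => zero_le_one)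
    have h2 : Vᵀ * diagonal (fun _ : Fin M => (1:ℝ)) * V = Vᵀ * V := by
      simp
    rw [← h2]
    exact aux_psd_det_nonneg this
  exact hnn.lt_of_ne' hne


theorem stmt_1 (M N : ℕ) (hN : 0 < N) (hMN : N ≤ M)
    (V : Matrix (Fin M) (Fin N) ℝ) (hV : V.rank = N)
    (G : (Fin M → ℝ) → Matrix (Fin N) (Fin N) ℝ)
    (hG : ∀ w, G w = Vᵀ * diagonal w * V)
    (E : (Fin M → ℝ) → ℝ)
    (hE : ∀ w, E w = -(1 / (N : ℝ)) * Real.log (G w).det + ∑ i, w i)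
    (F : (Fin M → ℝ) → ℝ) (hF : ∀ z, F z = E (fun i => (z i) ^ 2))
    (z₀ : Fin M → ℝ) :
    ((0 < (G (fun i => (z₀ i) ^ 2)).det ∧
        IsMinOn F {z | 0 < (G (fun i => (z i) ^ 2)).det} z₀) ↔
      ((fun i => (z₀ i) ^ 2) ∈ {w : Fin M → ℝ | (∀ i, 0 ≤ w i) ∧ ∑ i, w i = 1} ∧
        IsMaxOn (fun w => (G w).det) {w | (∀ i, 0 ≤ w i) ∧ ∑ i, w i = 1}
          (fun i => (z₀ i) ^ 2)))
    ∧ ((0 < (G (fun i => (z₀ i) ^ 2)).det ∧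
        IsMinOn F {z | 0 < (G (fun i => (z i) ^ 2)).det} z₀) →
          ∑ i, (z₀ i) ^ 2 = 1) := by
  have hNne : (N:ℝ) ≠ 0 := Nat.cast_ne_zero.mpr hN.ne'
  have hNpos : (0:ℝ) < 1 / N := by positivity
  have hFval : ∀ z : Fin M → ℝ,
      F z = -(1 / (N:ℝ)) * Real.log ((G (fun i => (z i) ^ 2)).det) + ∑ i, (z i) ^ 2 := by
    intro z; rw [hF, hE]
  have hNonempty : Nonempty (Fin N) := Fin.pos_iff_nonempty.mp hN
  have hdet0 : ∀ w : Fin M → ℝ, (∀ i, 0 ≤ w i) → 0 < (G w).det → 0 < ∑ i, w i := by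
    intro w hw hpos
    rcases (Finset.sum_nonneg fun i _ => hw i).lt_or_eq with h | h
    · exact h
    · exfalso
      have hz : ∀ i ∈ Finset.univ, w i = 0 :=
        (Finset.sum_eq_zero_iff_of_nonneg (fun i _ => hw i)).mp h.symm
      have hw0 : w = fun _ => 0 := funext fun i => hz i (Finset.mem_univ i)
      rw [hG, hw0] at hpos
      rw [show diagonal (fun _ : Fin M => (0:ℝ)) = 0 from by simp [Matrix.diagonal_zero],
        Matrix.mul_zero, Matrix.zero_mul, Matrix.det_zero] at hpos
      exact lt_irrefl 0 hpos
  have fwd : (0 < (G (fun i => (z₀ i) ^ 2)).det ∧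
        IsMinOn F {z | 0 < (G (fun i => (z i) ^ 2)).det} z₀) →
      ((fun i => (z₀ i) ^ 2) ∈ {w : Fin M → ℝ | (∀ i, 0 ≤ w i) ∧ ∑ i, w i = 1} ∧
        IsMaxOn (fun w => (G w).det) {w | (∀ i, 0 ≤ w i) ∧ ∑ i, w i = 1}
          (fun i => (z₀ i) ^ 2)) := by
    rintro ⟨hpos, hmin⟩
    have hs : 0 < ∑ i, (z₀ i) ^ 2 := hdet0 _ (fun i => sq_nonneg _) hpos
    set s := ∑ i, (z₀ i) ^ 2 with hsdef
    have hsum1 : s = 1 := by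
      by_contra hne
      set z₁ : Fin M → ℝ := fun i => (Real.sqrt s)⁻¹ * z₀ i with hz₁
      have hz₁sq : (fun i => (z₁ i) ^ 2) = fun i => s⁻¹ * (z₀ i) ^ 2 := by
        funext i
        rw [hz₁]
        rw [mul_pow, inv_pow, Real.sq_sqrt hs.le]
      have hdet₁ : (G (fun i => (z₁ i) ^ 2)).det = (s⁻¹) ^ N * (G (fun i => (z₀ i) ^ 2)).det := by
        rw [hz₁sq, hG, hG]
        exact aux_det_scale V s⁻¹ _
      have hpos₁ : 0 < (G (fun i => (z₁ i) ^ 2)).det := by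
        rw [hdet₁]; positivity
      have hle : F z₀ ≤ F z₁ := hmin hpos₁
      rw [hFval z₀, hFval z₁, hdet₁] at hle
      have hlog : Real.log ((s⁻¹) ^ N * (G (fun i => (z₀ i) ^ 2)).det)
          = -((N:ℝ) * Real.log s) + Real.log (G (fun i => (z₀ i) ^ 2)).det := by
        rw [Real.log_mul (by positivity) hpos.ne', Real.log_pow, Real.log_inv]
        ring
      have hsum₁ : ∑ i, (z₁ i) ^ 2 = 1 := by
        calc ∑ i, (z₁ i) ^ 2 = ∑ i, s⁻¹ * (z₀ i) ^ 2 :=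
              Finset.sum_congr rfl fun i _ => congrFun hz₁sq i
          _ = s⁻¹ * s := by rw [← Finset.mul_sum]
          _ = 1 := inv_mul_cancel₀ hs.ne'
      rw [hlog, hsum₁] at hle
      have hexp : -(1 / (N:ℝ)) * (-((N:ℝ) * Real.log s)
            + Real.log (G (fun i => (z₀ i) ^ 2)).det)
          = Real.log s - (1 / (N:ℝ)) * Real.log (G (fun i => (z₀ i) ^ 2)).det := by
        field_simp
        ring
      rw [hexp] at hle
      have hstrict := Real.log_lt_sub_one_of_pos hs hne
      linarith
    refine ⟨⟨fun i => sq_nonneg _, hsum1⟩, ?_⟩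
    rw [isMaxOn_iff]
    intro w hw
    obtain ⟨hwnn, hwsum⟩ := hw
    rcases le_or_gt (G w).det 0 with h | h
    · exact h.trans hpos.le
    · set z : Fin M → ℝ := fun i => Real.sqrt (w i) with hz
      have hzsq : (fun i => (z i) ^ 2) = w := funext fun i => Real.sq_sqrt (hwnn i)
      have hmem : z ∈ {z | 0 < (G (fun i => (z i) ^ 2)).det} := by
        show 0 < (G (fun i => (z i) ^ 2)).det
        rw [hzsq]; exact h
      have hle : F z₀ ≤ F z := hmin hmem
      rw [hFval z₀, hFval z, hzsq] at hle
      have h1 : Finset.univ.sum w = 1 := hwsum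
      have hs0 : ∑ i : Fin M, (z₀ i) ^ 2 = 1 := by rw [← hsdef]; exact hsum1
      rw [h1, hs0] at hle
      have h3 : (1 / (N:ℝ)) * Real.log (G w).det
          ≤ (1 / (N:ℝ)) * Real.log (G (fun i => (z₀ i) ^ 2)).det := by linarith
      have h4 : Real.log (G w).det ≤ Real.log (G (fun i => (z₀ i) ^ 2)).det :=
        le_of_mul_le_mul_left h3 hNpos
      exact (Real.log_le_log_iff h hpos).mp h4
  have bwd : ((fun i => (z₀ i) ^ 2) ∈ {w : Fin M → ℝ | (∀ i, 0 ≤ w i) ∧ ∑ i, w i = 1} ∧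
        IsMaxOn (fun w => (G w).det) {w | (∀ i, 0 ≤ w i) ∧ ∑ i, w i = 1}
          (fun i => (z₀ i) ^ 2)) →
      (0 < (G (fun i => (z₀ i) ^ 2)).det ∧
        IsMinOn F {z | 0 < (G (fun i => (z i) ^ 2)).det} z₀) := by
    rintro ⟨⟨hnn, hsum⟩, hmax⟩
    have hMpos : 0 < M := lt_of_lt_of_le hN hMN
    have hMne : (M:ℝ) ≠ 0 := Nat.cast_ne_zero.mpr hMpos.ne'
    set u : Fin M → ℝ := fun _ => (M:ℝ)⁻¹ with hu
    have hu_mem : u ∈ {w : Fin M → ℝ | (∀ i, 0 ≤ w i) ∧ ∑ i, w i = 1} := by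
      refine ⟨fun i => by positivity, ?_⟩
      simp only [hu, Finset.sum_const, Finset.card_fin, nsmul_eq_mul]
      field_simp
    have hdu : (G u).det = ((M:ℝ)⁻¹) ^ N * (Vᵀ * V).det := by
      rw [hG]
      have h1 : u = fun i => (M:ℝ)⁻¹ * (fun _ : Fin M => (1:ℝ)) i := by funext i; simp [hu]
      rw [h1, aux_det_scale]
      have h2 : diagonal (fun _ : Fin M => (1:ℝ)) = 1 := by simp
      rw [h2, Matrix.mul_one]
    have hdupos : 0 < (G u).det := by
      have hVV := aux_gram_det_pos V hV
      rw [hdu]; positivity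
    have hpos : 0 < (G (fun i => (z₀ i) ^ 2)).det := lt_of_lt_of_le hdupos (hmax hu_mem)
    refine ⟨hpos, ?_⟩
    rw [isMinOn_iff]
    intro z hz
    have hzpos : 0 < (G (fun i => (z i) ^ 2)).det := hz
    have hspos : 0 < ∑ i, (z i) ^ 2 := hdet0 _ (fun i => sq_nonneg _) hzpos
    set s := ∑ i, (z i) ^ 2 with hsdef
    set w' : Fin M → ℝ := fun i => s⁻¹ * (z i) ^ 2 with hw'
    have hw'det : (G w').det = (s⁻¹) ^ N * (G (fun i => (z i) ^ 2)).det := by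
      rw [hG, hG]
      exact aux_det_scale V s⁻¹ _
    have hw'pos : 0 < (G w').det := by rw [hw'det]; positivity
    have hw'mem : w' ∈ {w : Fin M → ℝ | (∀ i, 0 ≤ w i) ∧ ∑ i, w i = 1} := by
      refine ⟨fun i => by have := sq_nonneg (z i); positivity, ?_⟩
      simp only [hw']
      rw [← Finset.mul_sum, ← hsdef, inv_mul_cancel₀ hspos.ne']
    have hle : (G w').det ≤ (G (fun i => (z₀ i) ^ 2)).det := hmax hw'mem
    have hlogle : Real.log (G w').det ≤ Real.log (G (fun i => (z₀ i) ^ 2)).det :=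
      Real.log_le_log hw'pos hle
    have hrel : Real.log (G (fun i => (z i) ^ 2)).det
        = (N:ℝ) * Real.log s + Real.log (G w').det := by
      rw [hw'det, Real.log_mul (by positivity) hzpos.ne', Real.log_pow, Real.log_inv]
      ring
    have hlogs : Real.log s ≤ s - 1 := Real.log_le_sub_one_of_pos hspos
    rw [hFval z₀, hFval z]
    have hsum' : ∑ i, (z₀ i) ^ 2 = 1 := hsum
    rw [hsum', hrel, ← hsdef]
    have hexp : -(1 / (N:ℝ)) * ((N:ℝ) * Real.log s + Real.log (G w').det)
        = -Real.log s - (1 / (N:ℝ)) * Real.log (G w').det := by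
      field_simp
      ring
    rw [hexp]
    have hmul : (1 / (N:ℝ)) * Real.log (G w').det
        ≤ (1 / (N:ℝ)) * Real.log (G (fun i => (z₀ i) ^ 2)).det :=
      mul_le_mul_of_nonneg_left hlogle hNpos.le
    linarith
  exact ⟨⟨fwd, bwd⟩, fun h => (fwd h).1.2⟩
end

section
/- Let V be a real M×N matrix of full column rank N, G(w) := Vᵀ·diag(w)·V, E(w) := −(1/N)·log(det G(w)) + Σᵢ wᵢ, and F(z) := E(z²) with (z²)ᵢ = zᵢ². At any z ∈ ℝ^M with G(z²) positive definite, F is twice differentiable and, writing B_i := (V·G(z²)⁻¹·Vᵀ)ᵢᵢ and K_{ij} := (V·G(z²)⁻¹·Vᵀ)ᵢⱼ, one has ∂F/∂zᵢ (z) = 2·zᵢ·(1 − Bᵢ/N) and ∂²F/∂zᵢ∂zⱼ (z) = 4·zᵢ·zⱼ·K_{ij}²/N + 2·δᵢⱼ·(1 − Bᵢ/N), where δᵢⱼ is the Kronecker delta. -/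
open Matrix


namespace Stmt5Aux

variable {M N : ℕ}

/-- differentiability of a finite product -/
lemma diffProd {ι : Type*} (s : Finset ι) (f : ι → (Fin M → ℝ) → ℝ) {x : Fin M → ℝ}
    (hf : ∀ i ∈ s, DifferentiableAt ℝ (f i) x) :
    DifferentiableAt ℝ (fun v => ∏ i ∈ s, f i v) x := by
  classical
  induction s using Finset.induction with
  | empty => simpa using differentiableAt_const (1:ℝ)
  | insert a s hns ih =>
    simp only [Finset.prod_insert hns]
    exact (hf a (Finset.mem_insert_self a s)).mul
      (ih fun i hi => hf i (Finset.mem_insert_of_mem hi))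

lemma detDiff {f : (Fin M → ℝ) → Matrix (Fin N) (Fin N) ℝ} {x : Fin M → ℝ}
    (hf : ∀ a b, DifferentiableAt ℝ (fun v => f v a b) x) :
    DifferentiableAt ℝ (fun v => (f v).det) x := by
  simp only [Matrix.det_apply']
  exact DifferentiableAt.fun_sum fun σ _ =>
    ((diffProd Finset.univ _ fun i _ => hf (σ i) i).const_mul _)

variable (V : Matrix (Fin M) (Fin N) ℝ)

noncomputable def Am (v : Fin M → ℝ) : Matrix (Fin N) (Fin N) ℝ :=
  Vᵀ * diagonal (fun i => v i ^ 2) * V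

noncomputable def Dd (v : Fin M → ℝ) : ℝ := (Am V v).det

noncomputable def Kk (v : Fin M → ℝ) (p q : Fin M) : ℝ :=
  ∑ a, ∑ b, V p a * (Am V v)⁻¹ a b * V q b

lemma Am_apply (v : Fin M → ℝ) (a b : Fin N) :
    Am V v a b = ∑ k, V k a * v k ^ 2 * V k b := by
  simp [Am, mul_apply, diagonal_apply, transpose_apply, Finset.sum_mul, ite_mul, zero_mul,
    Finset.sum_ite_eq]

lemma Am_entry_diff (a b : Fin N) : Differentiable ℝ (fun v => Am V v a b) := by
  simp only [Am_apply]
  exact Differentiable.fun_sum fun k _ =>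
    (((differentiable_const _).mul ((differentiable_apply k).pow 2)).mul (differentiable_const _))

lemma Dd_diff : Differentiable ℝ (Dd V) := fun x =>
  detDiff fun a b => (Am_entry_diff V a b) x

lemma adj_diff (a b : Fin N) {x : Fin M → ℝ} :
    DifferentiableAt ℝ (fun v => (Am V v).adjugate a b) x := by
  simp only [Matrix.adjugate_apply]
  refine detDiff fun p q => ?_
  simp only [Matrix.updateRow_apply]
  by_cases h : p = b
  · simp only [if_pos h]
    exact differentiableAt_const _
  · simp only [if_neg h]
    exact (Am_entry_diff V p q) x

lemma inv_entry_eq (v : Fin M → ℝ) (a b : Fin N) :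
    (Am V v)⁻¹ a b = (Dd V v)⁻¹ * (Am V v).adjugate a b := by
  rw [Matrix.inv_def, Ring.inverse_eq_inv]
  simp [Dd, Matrix.smul_apply, smul_eq_mul]

lemma inv_entry_diff {x : Fin M → ℝ} (hx : Dd V x ≠ 0) (a b : Fin N) :
    DifferentiableAt ℝ (fun v => (Am V v)⁻¹ a b) x := by
  simp only [inv_entry_eq]
  exact ((Dd_diff V x).inv hx).mul (adj_diff V a b)

lemma Kk_diff {x : Fin M → ℝ} (hx : Dd V x ≠ 0) (p q : Fin M) :
    DifferentiableAt ℝ (fun v => Kk V v p q) x := by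
  refine DifferentiableAt.fun_sum fun a _ => DifferentiableAt.fun_sum fun b _ => ?_
  exact ((differentiableAt_const _).mul (inv_entry_diff V hx a b)).mul (differentiableAt_const _)

lemma Kk_eq (v : Fin M → ℝ) (p q : Fin M) :
    Kk V v p q = (V * (Am V v)⁻¹ * Vᵀ) p q := by
  simp only [Kk, mul_apply, transpose_apply, Finset.sum_mul]
  rw [Finset.sum_comm]

lemma Am_symm (v : Fin M → ℝ) : (Am V v)ᵀ = Am V v := by
  simp [Am, transpose_mul, Matrix.mul_assoc, diagonal_transpose]

lemma Kk_symm (v : Fin M → ℝ) (p q : Fin M) : Kk V v p q = Kk V v q p := by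
  have h : ∀ a b, (Am V v)⁻¹ a b = (Am V v)⁻¹ b a := by
    intro a b
    conv_lhs => rw [← Am_symm V v, ← Matrix.transpose_nonsing_inv]
    rfl
  unfold Kk
  rw [Finset.sum_comm]
  exact Finset.sum_congr rfl fun a _ => Finset.sum_congr rfl fun b _ => by rw [h a b]; ring


section MDL
variable {n : ℕ}


lemma vecMulVec_mulVec' (u v x : Fin n → ℝ) :
    vecMulVec u v *ᵥ x = (v ⬝ᵥ x) • u := by
  ext i
  simp only [Matrix.mulVec, dotProduct, vecMulVec_apply, Pi.smul_apply, smul_eq_mul,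
    Finset.mul_sum]
  rw [Finset.sum_mul]
  exact Finset.sum_congr rfl fun k _ => by ring

lemma wbw (B : Matrix (Fin n) (Fin n) ℝ) (u : Fin n → ℝ) :
    vecMulVec u u * B * vecMulVec u u = (u ⬝ᵥ B *ᵥ u) • vecMulVec u u := by
  ext i j
  simp only [Matrix.mul_apply, vecMulVec_apply, Matrix.smul_apply, smul_eq_mul,
    dotProduct, Matrix.mulVec, Finset.sum_mul, Finset.mul_sum]
  rw [Finset.sum_comm]
  exact Finset.sum_congr rfl fun a _ => Finset.sum_congr rfl fun b _ => by ring

lemma mul_vecMulVec (A : Matrix (Fin n) (Fin n) ℝ) (w v : Fin n → ℝ) :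
    A * vecMulVec w v = vecMulVec (A *ᵥ w) v := by
  ext i j
  simp only [Matrix.mul_apply, vecMulVec_apply, Matrix.mulVec, dotProduct, Finset.sum_mul]
  exact Finset.sum_congr rfl fun k _ => by ring

lemma smul_vecMulVec (c : ℝ) (w v : Fin n → ℝ) :
    vecMulVec (c • w) v = c • vecMulVec w v := by
  ext i j
  simp [vecMulVec_apply, smul_eq_mul]
  ring

lemma det_rank_one_update {A : Matrix (Fin n) (Fin n) ℝ} (hA : IsUnit A.det)
    (u : Fin n → ℝ) (c : ℝ) :
    (A + c • vecMulVec u u).det = A.det * (1 + c * (u ⬝ᵥ A⁻¹ *ᵥ u)) := by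
  have hAA : A * A⁻¹ = 1 := Matrix.mul_nonsing_inv A hA
  have h2 : A + c • vecMulVec u u = A * (1 + replicateCol (Fin 1) (c • (A⁻¹ *ᵥ u)) * replicateRow (Fin 1) u) := by
    rw [Matrix.mul_add, Matrix.mul_one, show replicateCol (Fin 1) (c • (A⁻¹ *ᵥ u)) * replicateRow (Fin 1) u =
      vecMulVec (c • (A⁻¹ *ᵥ u)) u from (vecMulVec_eq (Fin 1) _ _).symm, mul_vecMulVec]
    congr 1
    rw [Matrix.mulVec_smul, Matrix.mulVec_mulVec, hAA, Matrix.one_mulVec, smul_vecMulVec]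
  rw [h2, Matrix.det_mul, show Matrix.det ((1 : Matrix (Fin n) (Fin n) ℝ) + replicateCol (Fin 1) (c • (A⁻¹ *ᵥ u)) * replicateRow (Fin 1) u) =
      1 + u ⬝ᵥ c • (A⁻¹ *ᵥ u) from Matrix.det_one_add_replicateCol_mul_replicateRow (ι := Fin 1) _ _]
  congr 1
  rw [dotProduct_smul]
  simp [smul_eq_mul]

lemma inv_rank_one_update {A : Matrix (Fin n) (Fin n) ℝ} (hA : IsUnit A.det)
    (u : Fin n → ℝ) (c : ℝ) (h1 : 1 + c * (u ⬝ᵥ A⁻¹ *ᵥ u) ≠ 0) :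
    (A + c • vecMulVec u u)⁻¹ =
      A⁻¹ - (c / (1 + c * (u ⬝ᵥ A⁻¹ *ᵥ u))) • (A⁻¹ * vecMulVec u u * A⁻¹) := by
  apply Matrix.inv_eq_right_inv
  set W := vecMulVec u u with hW
  set β : ℝ := u ⬝ᵥ A⁻¹ *ᵥ u with hβ
  set s : ℝ := c / (1 + c * β) with hs
  have hAA : A * A⁻¹ = 1 := Matrix.mul_nonsing_inv A hA
  have hkey : W * A⁻¹ * W = β • W := wbw A⁻¹ u
  have hsc : s * (1 + c * β) = c := div_mul_cancel₀ c h1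
  have e1 : A * (A⁻¹ * W * A⁻¹) = W * A⁻¹ := by
    rw [show A * (A⁻¹ * W * A⁻¹) = (A * A⁻¹) * W * A⁻¹ by simp only [Matrix.mul_assoc], hAA,
      Matrix.one_mul]
  have e2 : W * (A⁻¹ * W * A⁻¹) = β • (W * A⁻¹) := by
    rw [show W * (A⁻¹ * W * A⁻¹) = (W * A⁻¹ * W) * A⁻¹ by simp only [Matrix.mul_assoc], hkey,
      Matrix.smul_mul]
  have expand : (A + c • W) * (A⁻¹ - s • (A⁻¹ * W * A⁻¹)) =
      1 + (c - (s + c * (s * β))) • (W * A⁻¹) := by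
    rw [Matrix.add_mul, Matrix.mul_sub, hAA, Matrix.mul_smul, e1, Matrix.smul_mul,
      Matrix.mul_sub, Matrix.mul_smul, e2]
    module
  rw [expand]
  have : c - (s + c * (s * β)) = 0 := by
    have : s + c * (s * β) = s * (1 + c * β) := by ring
    rw [this, hsc]
    ring
  rw [this, zero_smul, add_zero]


end MDL

section Line

variable {M N : ℕ} (V : Matrix (Fin M) (Fin N) ℝ)

noncomputable def uvec (i : Fin M) : Fin N → ℝ := fun a => V i a

lemma dot_form (B : Matrix (Fin N) (Fin N) ℝ) (p q : Fin M) :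
    ∑ a, ∑ b, V p a * B a b * V q b = uvec V p ⬝ᵥ B *ᵥ uvec V q := by
  simp only [uvec, dotProduct, Matrix.mulVec, Finset.mul_sum]
  exact Finset.sum_congr rfl fun a _ => Finset.sum_congr rfl fun b _ => by ring

lemma Kk_dot (v : Fin M → ℝ) (p q : Fin M) :
    Kk V v p q = uvec V p ⬝ᵥ (Am V v)⁻¹ *ᵥ uvec V q := dot_form V _ p q

lemma line_Am (w : Fin M → ℝ) (i : Fin M) (t : ℝ) :
    Am V (w + t • (Pi.single i 1 : Fin M → ℝ)) =
      Am V w + ((w i + t) ^ 2 - w i ^ 2) • vecMulVec (uvec V i) (uvec V i) := by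
  ext a b
  simp only [Am_apply, Matrix.add_apply, Matrix.smul_apply, vecMulVec_apply, smul_eq_mul,
    Pi.add_apply, Pi.smul_apply, Pi.single_apply, uvec]
  rw [show ((w i + t) ^ 2 - w i ^ 2) * (V i a * V i b) =
      ∑ k, (if k = i then ((w i + t) ^ 2 - w i ^ 2) * (V k a * V k b) else 0) from by
        rw [Finset.sum_ite_eq' Finset.univ i
          (fun k => ((w i + t) ^ 2 - w i ^ 2) * (V k a * V k b))]
        simp]
  rw [← Finset.sum_add_distrib]
  refine Finset.sum_congr rfl fun k _ => ?_
  by_cases h : k = i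
  · subst h
    norm_num
    ring
  · simp only [if_neg h]
    ring

lemma line_det {w : Fin M → ℝ} (hw : Dd V w ≠ 0) (i : Fin M) (t : ℝ) :
    Dd V (w + t • (Pi.single i 1 : Fin M → ℝ)) =
      Dd V w * (1 + ((w i + t) ^ 2 - w i ^ 2) * Kk V w i i) := by
  unfold Dd
  rw [line_Am, det_rank_one_update (isUnit_iff_ne_zero.2 hw), ← Kk_dot]

lemma line_K {w : Fin M → ℝ} (hw : Dd V w ≠ 0) {i : Fin M} {t : ℝ}
    (h1 : 1 + ((w i + t) ^ 2 - w i ^ 2) * Kk V w i i ≠ 0) (p q : Fin M) :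
    Kk V (w + t • (Pi.single i 1 : Fin M → ℝ)) p q =
      Kk V w p q - (((w i + t) ^ 2 - w i ^ 2) /
          (1 + ((w i + t) ^ 2 - w i ^ 2) * Kk V w i i)) *
        (Kk V w p i * Kk V w i q) := by
  have h1' : 1 + ((w i + t) ^ 2 - w i ^ 2) * (uvec V i ⬝ᵥ (Am V w)⁻¹ *ᵥ uvec V i) ≠ 0 := by
    rwa [← Kk_dot]
  rw [Kk_dot, line_Am, inv_rank_one_update (isUnit_iff_ne_zero.2 hw) _ _ h1', ← Kk_dot]
  rw [Matrix.sub_mulVec, dotProduct_sub, Matrix.smul_mulVec, dotProduct_smul,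
    smul_eq_mul, ← Kk_dot]
  congr 1
  congr 1
  rw [show (Am V w)⁻¹ * vecMulVec (uvec V i) (uvec V i) * (Am V w)⁻¹ =
      (Am V w)⁻¹ * (vecMulVec (uvec V i) (uvec V i) * (Am V w)⁻¹) from by
    rw [Matrix.mul_assoc]]
  rw [← Matrix.mulVec_mulVec, ← Matrix.mulVec_mulVec, vecMulVec_mulVec']
  rw [Matrix.mulVec_smul, dotProduct_smul, smul_eq_mul, ← Kk_dot, ← Kk_dot, mul_comm]

end Line

section Deriv

variable {M N : ℕ} (V : Matrix (Fin M) (Fin N) ℝ)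

lemma line_hasDerivAt (f : (Fin M → ℝ) → ℝ) {w : Fin M → ℝ} (hf : DifferentiableAt ℝ f w)
    (i : Fin M) :
    HasDerivAt (fun t : ℝ => f (w + t • (Pi.single i 1 : Fin M → ℝ)))
      (fderiv ℝ f w (Pi.single i 1)) 0 := by
  have hline : HasDerivAt (fun t : ℝ => w + t • (Pi.single i 1 : Fin M → ℝ))
      (Pi.single i 1 : Fin M → ℝ) 0 := by
    simpa using ((hasDerivAt_id (0 : ℝ)).smul_const (Pi.single i 1 : Fin M → ℝ)).const_add w
  have h0 : w + (0 : ℝ) • (Pi.single i 1 : Fin M → ℝ) = w := by simp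
  have hf' : HasFDerivAt f (fderiv ℝ f w) (w + (0 : ℝ) • (Pi.single i 1 : Fin M → ℝ)) := by
    rw [h0]; exact hf.hasFDerivAt
  exact hf'.comp_hasDerivAt 0 hline

lemma hasDerivAt_c (wi : ℝ) : HasDerivAt (fun t : ℝ => (wi + t) ^ 2 - wi ^ 2) (2 * wi) 0 := by
  have h : HasDerivAt (fun t : ℝ => wi + t) 1 0 := by
    simpa using (hasDerivAt_id (0 : ℝ)).const_add wi
  have h2 := (h.pow 2).sub_const (wi ^ 2)
  refine h2.congr_deriv ?_
  norm_num

lemma F_diff {F : (Fin M → ℝ) → ℝ}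
    (hFeq : ∀ v, F v = -(1 / (N : ℝ)) * Real.log (Dd V v) + ∑ k, v k ^ 2)
    {v : Fin M → ℝ} (hv : Dd V v ≠ 0) : DifferentiableAt ℝ F v := by
  have hfe : F = fun v => -(1 / (N : ℝ)) * Real.log (Dd V v) + ∑ k, v k ^ 2 := funext hFeq
  rw [hfe]
  refine DifferentiableAt.add ?_ ?_
  · exact (((Dd_diff V) v).log hv).const_mul _
  · exact DifferentiableAt.fun_sum fun k _ => ((differentiable_apply k) v).pow 2

lemma Fderiv_val {F : (Fin M → ℝ) → ℝ}
    (hFeq : ∀ v, F v = -(1 / (N : ℝ)) * Real.log (Dd V v) + ∑ k, v k ^ 2)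
    {v : Fin M → ℝ} (hv : Dd V v ≠ 0) (j : Fin M) :
    fderiv ℝ F v (Pi.single j 1) = 2 * v j * (1 - Kk V v j j / (N : ℝ)) := by
  have hFd := F_diff V hFeq hv
  have h1 := line_hasDerivAt F hFd j
  have hc := hasDerivAt_c (v j)
  have hinner : HasDerivAt (fun t : ℝ => Dd V v * (1 + ((v j + t) ^ 2 - v j ^ 2) * Kk V v j j))
      (Dd V v * (2 * v j * Kk V v j j)) 0 := by
    have h := ((hc.mul_const (Kk V v j j)).const_add 1).const_mul (Dd V v)
    refine h.congr_deriv ?_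
    all_goals try ring
  have hval0 : Dd V v * (1 + ((v j + (0 : ℝ)) ^ 2 - v j ^ 2) * Kk V v j j) = Dd V v := by
    norm_num
  have hlog : HasDerivAt (fun t : ℝ => Real.log (Dd V (v + t • (Pi.single j 1 : Fin M → ℝ))))
      (2 * v j * Kk V v j j) 0 := by
    have heq : (fun t : ℝ => Real.log (Dd V (v + t • (Pi.single j 1 : Fin M → ℝ)))) =
        fun t : ℝ => Real.log (Dd V v * (1 + ((v j + t) ^ 2 - v j ^ 2) * Kk V v j j)) := by
      funext t
      rw [line_det V hv j t]
    rw [heq]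
    have hne : Dd V v * (1 + ((v j + (0 : ℝ)) ^ 2 - v j ^ 2) * Kk V v j j) ≠ 0 := by
      rw [hval0]; exact hv
    have hcomp := (Real.hasDerivAt_log hne).comp 0 hinner
    refine hcomp.congr_deriv ?_
    rw [hval0]
    field_simp
  have hsq : HasDerivAt (fun t : ℝ => ∑ k, (v + t • (Pi.single j 1 : Fin M → ℝ)) k ^ 2)
      (2 * v j) 0 := by
    have h : ∀ k ∈ Finset.univ, HasDerivAt
        (fun t : ℝ => (v k + t * (Pi.single j 1 : Fin M → ℝ) k) ^ 2)
        (2 * v k * (Pi.single j 1 : Fin M → ℝ) k) 0 := by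
      intro k _
      have hb : HasDerivAt (fun t : ℝ => v k + t * (Pi.single j 1 : Fin M → ℝ) k)
          ((Pi.single j 1 : Fin M → ℝ) k) 0 := by
        simpa using ((hasDerivAt_id (0 : ℝ)).mul_const ((Pi.single j 1 : Fin M → ℝ) k)).const_add
          (v k)
      have h2 := hb.pow 2
      refine h2.congr_deriv ?_
      all_goals try norm_num
      all_goals try ring
    have hs := HasDerivAt.fun_sum h
    have hfun : (fun t : ℝ => ∑ k, (v + t • (Pi.single j 1 : Fin M → ℝ)) k ^ 2) =
        fun t : ℝ => ∑ k, (v k + t * (Pi.single j 1 : Fin M → ℝ) k) ^ 2 := by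
      funext t
      exact Finset.sum_congr rfl fun k _ => by simp
    have hvalsum : (∑ k, 2 * v k * (Pi.single j 1 : Fin M → ℝ) k) = 2 * v j := by
      simp [Pi.single_apply, mul_ite, Finset.sum_ite_eq']
    rw [hfun, ← hvalsum]
    exact hs
  have hFline : HasDerivAt (fun t : ℝ => F (v + t • (Pi.single j 1 : Fin M → ℝ)))
      (-(1 / (N : ℝ)) * (2 * v j * Kk V v j j) + 2 * v j) 0 := by
    have h := (hlog.const_mul (-(1 / (N : ℝ)))).add hsq
    have hfun : (fun t : ℝ => F (v + t • (Pi.single j 1 : Fin M → ℝ))) =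
        fun t : ℝ => -(1 / (N : ℝ)) *
            Real.log (Dd V (v + t • (Pi.single j 1 : Fin M → ℝ))) +
          ∑ k, (v + t • (Pi.single j 1 : Fin M → ℝ)) k ^ 2 := by
      funext t
      rw [hFeq]
    rw [hfun]
    exact h
  have huniq := h1.unique hFline
  rw [huniq]
  ring

lemma gj_diff {z : Fin M → ℝ} (hz : Dd V z ≠ 0) (j : Fin M) :
    DifferentiableAt ℝ (fun v => 2 * v j * (1 - Kk V v j j / (N : ℝ))) z := by
  have h1 : DifferentiableAt ℝ (fun v : Fin M → ℝ => 2 * v j) z :=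
    ((differentiable_apply j) z).const_mul 2
  have h2 : DifferentiableAt ℝ (fun v : Fin M → ℝ => Kk V v j j / (N : ℝ)) z := by
    simp only [div_eq_mul_inv]
    exact (Kk_diff V hz j j).mul (differentiableAt_const _)
  exact h1.mul ((differentiableAt_const 1).sub h2)

lemma gj_line_hasDeriv {z : Fin M → ℝ} (hz : Dd V z ≠ 0) (i j : Fin M) :
    HasDerivAt (fun t : ℝ => 2 * (z + t • (Pi.single i 1 : Fin M → ℝ)) j *
        (1 - Kk V (z + t • (Pi.single i 1 : Fin M → ℝ)) j j / (N : ℝ)))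
      (2 * (Pi.single i 1 : Fin M → ℝ) j * (1 - Kk V z j j / (N : ℝ)) +
        4 * z i * z j * Kk V z i j ^ 2 / (N : ℝ)) 0 := by
  set P : ℝ := Kk V z j i * Kk V z i j with hP
  have hc := hasDerivAt_c (z i)
  have hden : HasDerivAt (fun t : ℝ => 1 + ((z i + t) ^ 2 - z i ^ 2) * Kk V z i i)
      (2 * z i * Kk V z i i) 0 := by
    have h := (hc.mul_const (Kk V z i i)).const_add 1
    refine h.congr_deriv ?_
    all_goals try ring
  have hden0 : (1 : ℝ) + ((z i + (0 : ℝ)) ^ 2 - z i ^ 2) * Kk V z i i = 1 := by norm_num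
  have hsder : HasDerivAt (fun t : ℝ => ((z i + t) ^ 2 - z i ^ 2) /
      (1 + ((z i + t) ^ 2 - z i ^ 2) * Kk V z i i)) (2 * z i) 0 := by
    have h := hc.div hden (by rw [hden0]; norm_num)
    refine h.congr_deriv ?_
    rw [hden0]
    norm_num
  have hf2 : HasDerivAt (fun t : ℝ =>
      1 - (Kk V z j j - (((z i + t) ^ 2 - z i ^ 2) /
        (1 + ((z i + t) ^ 2 - z i ^ 2) * Kk V z i i)) * P) / (N : ℝ))
      (2 * z i * P / (N : ℝ)) 0 := by
    have h := (((hsder.mul_const P).const_sub (Kk V z j j)).div_const ((N : ℝ))).const_sub 1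
    refine h.congr_deriv ?_
    all_goals try ring
  have hf1 : HasDerivAt (fun t : ℝ => 2 * (z j + t * (Pi.single i 1 : Fin M → ℝ) j))
      (2 * (Pi.single i 1 : Fin M → ℝ) j) 0 := by
    simpa using (((hasDerivAt_id (0 : ℝ)).mul_const
      ((Pi.single i 1 : Fin M → ℝ) j)).const_add (z j)).const_mul 2
  have hmul := hf1.mul hf2
  have hev : (fun t : ℝ => 2 * (z + t • (Pi.single i 1 : Fin M → ℝ)) j *
        (1 - Kk V (z + t • (Pi.single i 1 : Fin M → ℝ)) j j / (N : ℝ))) =ᶠ[nhds (0 : ℝ)]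
      fun t : ℝ => 2 * (z j + t * (Pi.single i 1 : Fin M → ℝ) j) *
        (1 - (Kk V z j j - (((z i + t) ^ 2 - z i ^ 2) /
          (1 + ((z i + t) ^ 2 - z i ^ 2) * Kk V z i i)) * P) / (N : ℝ)) := by
    have hcont : ContinuousAt (fun t : ℝ => 1 + ((z i + t) ^ 2 - z i ^ 2) * Kk V z i i) 0 := by
      fun_prop
    have hne : ∀ᶠ t in nhds (0 : ℝ), 1 + ((z i + t) ^ 2 - z i ^ 2) * Kk V z i i ≠ 0 :=
      hcont.eventually_ne (by norm_num)
    filter_upwards [hne] with t ht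
    rw [line_K V hz ht j j, hP]
    simp
  refine HasDerivAt.congr_of_eventuallyEq ?_ hev
  have hPs : P = Kk V z i j ^ 2 := by rw [hP, Kk_symm V z j i]; ring
  refine hmul.congr_deriv ?_
  rw [hPs]
  norm_num
  ring

end Deriv

end Stmt5Aux

open Stmt5Aux in
theorem stmt_5 (M N : ℕ) (hN : 0 < N) (hMN : N ≤ M)
    (V : Matrix (Fin M) (Fin N) ℝ) (hV : V.rank = N)
    (G : (Fin M → ℝ) → Matrix (Fin N) (Fin N) ℝ)
    (hG : ∀ w, G w = Vᵀ * diagonal w * V)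
    (E : (Fin M → ℝ) → ℝ)
    (hE : ∀ w, E w = -(1 / (N : ℝ)) * Real.log (G w).det + ∑ i, w i)
    (F : (Fin M → ℝ) → ℝ) (hF : ∀ z, F z = E (fun i => (z i) ^ 2))
    (z : Fin M → ℝ) (hz : (G (fun i => (z i) ^ 2)).PosDef) :
    DifferentiableAt ℝ F z ∧
    (∀ j, DifferentiableAt ℝ (fun v => fderiv ℝ F v (Pi.single j 1)) z) ∧
    (∀ i, fderiv ℝ F z (Pi.single i 1) =
      2 * z i * (1 - (V * (G (fun i => (z i) ^ 2))⁻¹ * Vᵀ) i i / (N : ℝ))) ∧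
    (∀ i j, fderiv ℝ (fun v => fderiv ℝ F v (Pi.single j 1)) z (Pi.single i 1) =
      4 * z i * z j * ((V * (G (fun i => (z i) ^ 2))⁻¹ * Vᵀ) i j) ^ 2 / (N : ℝ) +
        2 * (if i = j then (1 : ℝ) else 0) *
          (1 - (V * (G (fun i => (z i) ^ 2))⁻¹ * Vᵀ) i i / (N : ℝ))) := by
  classical
  have hAmG : ∀ v : Fin M → ℝ, G (fun i => v i ^ 2) = Am V v := fun v => by
    rw [hG]; rfl
  have hFeq : ∀ v, F v = -(1 / (N : ℝ)) * Real.log (Dd V v) + ∑ k, v k ^ 2 := by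
    intro v
    rw [hF, hE, hAmG]
    rfl
  have hdz : Dd V z ≠ 0 := by
    have h1 : 0 < (G (fun i => z i ^ 2)).det := hz.det_pos
    rw [hAmG] at h1
    exact ne_of_gt h1
  have hKmat : ∀ p q, (V * (G (fun i => z i ^ 2))⁻¹ * Vᵀ) p q = Kk V z p q := by
    intro p q
    rw [hAmG, Kk_eq]
  have hop : ∀ᶠ v in nhds z, Dd V v ≠ 0 :=
    ((Dd_diff V).continuous.continuousAt).eventually_ne hdz
  have hev : ∀ j : Fin M, (fun v => fderiv ℝ F v (Pi.single j 1)) =ᶠ[nhds z]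
      fun v => 2 * v j * (1 - Kk V v j j / (N : ℝ)) := by
    intro j
    filter_upwards [hop] with v hv
    exact Fderiv_val V hFeq hv j
  refine ⟨F_diff V hFeq hdz, ?_, ?_, ?_⟩
  · intro j
    exact ((hev j).differentiableAt_iff).2 (gj_diff V hdz j)
  · intro i
    rw [hKmat i i]
    exact Fderiv_val V hFeq hdz i
  · intro i j
    have hfd : fderiv ℝ (fun v => fderiv ℝ F v (Pi.single j 1)) z =
        fderiv ℝ (fun v => 2 * v j * (1 - Kk V v j j / (N : ℝ))) z :=
      (hev j).fderiv_eq
    rw [hfd]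
    have h1 := line_hasDerivAt (fun v : Fin M → ℝ => 2 * v j * (1 - Kk V v j j / (N : ℝ)))
      (gj_diff V hdz j) i
    have h2 := gj_line_hasDeriv V hdz i j
    have huniq := h1.unique h2
    rw [huniq, hKmat i j, hKmat i i]
    by_cases h : i = j
    · subst h
      simp only [Pi.single_eq_same, if_pos rfl, if_true]
      try ring
      all_goals norm_num
      all_goals try ring
    · have hsing : (Pi.single i 1 : Fin M → ℝ) j = 0 := by
        rw [Pi.single_apply, if_neg (Ne.symm h)]
      rw [hsing, if_neg h]
      ring
end

section
/- Let V be a real M×N matrix of full column rank N, G(w) := Vᵀ·diag(w)·V, and E(w) := −(1/N)·log(det G(w)) + Σᵢ wᵢ. For every w ∈ ℝ^M with wᵢ ≥ 0 for all i and G(w) positive definite, and for every u ∈ ℝ^M, one has uᵀ·Hess E(w)·u = 0 if and only if Vᵀ·diag(u)·V = 0 (the zero N×N matrix), i.e., if and only if Σᵢ uᵢ·Vᵢₕ·Vᵢₖ = 0 for all h, k ∈ {1, ..., N}. -/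
open Matrix

noncomputable def detCM (n : ℕ) : ContinuousMultilinearMap ℝ (fun _ : Fin n => (Fin n → ℝ)) ℝ :=
  MultilinearMap.mkContinuous
    ((Matrix.detRowAlternating : (Fin n → ℝ) [⋀^Fin n]→ₗ[ℝ] ℝ).toMultilinearMap)
    (n.factorial) <| by
  intro m
  have h1 : (Matrix.detRowAlternating (R := ℝ) (n := Fin n)) m = (Matrix.of m).det := rfl
  rw [show ((Matrix.detRowAlternating (R := ℝ) (n := Fin n)).toMultilinearMap) m = (Matrix.of m).det from rfl, Matrix.det_apply]
  refine (norm_sum_le _ _).trans ?_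
  have hb : ∀ σ : Equiv.Perm (Fin n), ‖(Equiv.Perm.sign σ : ℤ) • ∏ i, Matrix.of m (σ i) i‖
      ≤ ∏ i, ‖m i‖ := by
    intro σ
    rw [zsmul_eq_mul]
    calc ‖((Equiv.Perm.sign σ : ℤ) : ℝ) * ∏ i, Matrix.of m (σ i) i‖
        = ‖∏ i, m (σ i) i‖ := by
          rw [norm_mul]
          rcases Int.units_eq_one_or σ.sign with h | h <;> simp [h]
      _ ≤ ∏ i, ‖m (σ i) i‖ := le_of_eq (by rw [Real.norm_eq_abs, Finset.abs_prod]; rfl)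
      _ ≤ ∏ i, ‖m (σ i)‖ := by
          refine Finset.prod_le_prod (fun i _ => norm_nonneg _) (fun i _ => norm_le_pi_norm _ _)
      _ = ∏ i, ‖m i‖ := Equiv.prod_comp σ (fun i => ‖m i‖)
  refine (Finset.sum_le_sum (fun σ _ => hb σ)).trans ?_
  rw [Finset.sum_const, Finset.card_univ, Fintype.card_perm, nsmul_eq_mul]
  simp

theorem detCM_apply (n : ℕ) (m : Fin n → Fin n → ℝ) : detCM n m = (Matrix.of m).det := rfl

theorem detCM_hasFDerivAt (n : ℕ) (x : Fin n → Fin n → ℝ) :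
    HasFDerivAt (detCM n) ((detCM n).linearDeriv x) x :=
  (detCM n).hasFDerivAt x


theorem sum_det_updateRow (n : ℕ) (A B : Matrix (Fin n) (Fin n) ℝ) :
    ∑ i, (A.updateRow i (B i)).det = Matrix.trace (A.adjugate * B) := by
  have h1 : ∀ i, (A.updateRow i (B i)).det = Matrix.cramer Aᵀ (B i) i := by
    intro i
    rw [Matrix.cramer_apply, ← Matrix.det_transpose, Matrix.updateCol_transpose]
  have h2 : ∀ i, Matrix.cramer Aᵀ (B i) i = ∑ j, Matrix.adjugate A j i * B i j := by
    intro i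
    rw [Matrix.cramer_eq_adjugate_mulVec]
    rw [Matrix.mulVec]
    rw [show Matrix.adjugate Aᵀ = (Matrix.adjugate A)ᵀ from (Matrix.adjugate_transpose A).symm]
    simp [dotProduct, Matrix.transpose_apply]
  simp only [h1, h2]
  rw [Matrix.trace]
  simp only [Matrix.diag, Matrix.mul_apply]
  exact Finset.sum_comm

noncomputable def gCLM (Mn Nn : ℕ) (V : Matrix (Fin Mn) (Fin Nn) ℝ) :
    (Fin Mn → ℝ) →L[ℝ] (Fin Nn → Fin Nn → ℝ) :=
  LinearMap.toContinuousLinearMap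
  { toFun := fun v => fun i j => (Vᵀ * diagonal v * V) i j
    map_add' := by
      intro a b
      have h1 : diagonal (a + b) = diagonal a + diagonal b := by
        ext i j; by_cases h : i = j <;> simp [Matrix.diagonal_apply, h]
      funext i j
      show (Vᵀ * diagonal (a + b) * V) i j = _
      rw [h1, Matrix.mul_add, Matrix.add_mul]
      rfl
    map_smul' := by
      intro c a
      have h1 : diagonal (c • a) = c • diagonal a := by
        ext i j; by_cases h : i = j <;> simp [Matrix.diagonal_apply, h]
      funext i j
      show (Vᵀ * diagonal (c • a) * V) i j = _
      rw [h1, Matrix.mul_smul, Matrix.smul_mul]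
      rfl }

theorem gCLM_apply (Mn Nn : ℕ) (V : Matrix (Fin Mn) (Fin Nn) ℝ) (v : Fin Mn → ℝ) :
    gCLM Mn Nn V v = fun i j => (Vᵀ * diagonal v * V) i j := rfl

theorem hasFDerivAt_detG (Mn Nn : ℕ) (V : Matrix (Fin Mn) (Fin Nn) ℝ) (v : Fin Mn → ℝ) :
    HasFDerivAt (fun v => (Vᵀ * diagonal v * V).det)
      (((detCM Nn).linearDeriv (gCLM Mn Nn V v)).comp (gCLM Mn Nn V)) v := by
  have h := ((detCM Nn).hasFDerivAt (gCLM Mn Nn V v)).comp v (gCLM Mn Nn V).hasFDerivAt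
  have hfun : (fun v => (Vᵀ * diagonal v * V).det) = ⇑(detCM Nn) ∘ ⇑(gCLM Mn Nn V) := by
    funext v
    rw [Function.comp_apply, gCLM_apply, detCM_apply]
    rfl
  rw [hfun]
  exact h

theorem detG_deriv_apply (Mn Nn : ℕ) (V : Matrix (Fin Mn) (Fin Nn) ℝ) (v u : Fin Mn → ℝ) :
    (((detCM Nn).linearDeriv (gCLM Mn Nn V v)).comp (gCLM Mn Nn V)) u
      = Matrix.trace ((Vᵀ * diagonal v * V).adjugate * (Vᵀ * diagonal u * V)) := by
  rw [ContinuousLinearMap.comp_apply, ContinuousMultilinearMap.linearDeriv_apply,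
    ← sum_det_updateRow]
  refine Finset.sum_congr rfl fun i _ => ?_
  rw [detCM_apply]
  rfl

noncomputable def sumCLM (Mn : ℕ) : (Fin Mn → ℝ) →L[ℝ] ℝ :=
  ∑ i, ContinuousLinearMap.proj i

theorem sumCLM_apply (Mn : ℕ) (v : Fin Mn → ℝ) : sumCLM Mn v = ∑ i, v i := by
  simp [sumCLM]

theorem hasFDerivAt_E (Mn Nn : ℕ) (V : Matrix (Fin Mn) (Fin Nn) ℝ) (v : Fin Mn → ℝ)
    (hv : (Vᵀ * diagonal v * V).det ≠ 0) :
    HasFDerivAt (fun v => -(1 / (Nn : ℝ)) * Real.log (Vᵀ * diagonal v * V).det + ∑ i, v i)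
      ((-(1 / (Nn : ℝ))) • (((Vᵀ * diagonal v * V).det)⁻¹ •
          (((detCM Nn).linearDeriv (gCLM Mn Nn V v)).comp (gCLM Mn Nn V))) + sumCLM Mn) v := by
  have h1 := hasFDerivAt_detG Mn Nn V v
  have h2 : HasFDerivAt (fun v => Real.log (Vᵀ * diagonal v * V).det)
      (((Vᵀ * diagonal v * V).det)⁻¹ •
        (((detCM Nn).linearDeriv (gCLM Mn Nn V v)).comp (gCLM Mn Nn V))) v :=
    by have h := (Real.hasDerivAt_log hv).comp_hasFDerivAt v h1; exact h
  have h3 := h2.const_mul (-(1 / (Nn : ℝ)))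
  have h4 : HasFDerivAt (fun v : Fin Mn → ℝ => ∑ i, v i) (sumCLM Mn) v := by
    have := (sumCLM Mn).hasFDerivAt (x := v)
    refine this.congr_of_eventuallyEq (Filter.Eventually.of_forall fun x => ?_)
    rw [sumCLM_apply]
  exact h3.add h4

-- fderiv value
theorem fderiv_E_eq (Mn Nn : ℕ) (V : Matrix (Fin Mn) (Fin Nn) ℝ)
    (E : (Fin Mn → ℝ) → ℝ)
    (hE : ∀ w, E w = -(1 / (Nn : ℝ)) * Real.log (Vᵀ * diagonal w * V).det + ∑ i, w i)
    (v : Fin Mn → ℝ) (hv : (Vᵀ * diagonal v * V).det ≠ 0) (u : Fin Mn → ℝ) :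
    fderiv ℝ E v u = -(1 / (Nn : ℝ)) *
        Matrix.trace (Ring.inverse (Vᵀ * diagonal v * V) * (Vᵀ * diagonal u * V)) + ∑ i, u i := by
  have hEfun : E = fun v => -(1 / (Nn : ℝ)) * Real.log (Vᵀ * diagonal v * V).det + ∑ i, v i :=
    funext hE
  rw [hEfun, (hasFDerivAt_E Mn Nn V v hv).fderiv]
  rw [ContinuousLinearMap.add_apply, ContinuousLinearMap.smul_apply,
    ContinuousLinearMap.smul_apply, detG_deriv_apply, sumCLM_apply]
  congr 1
  rw [smul_eq_mul, smul_eq_mul, ← Matrix.nonsing_inv_eq_ringInverse, Matrix.inv_def,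
    Ring.inverse_eq_inv', Matrix.smul_mul, Matrix.trace_smul, smul_eq_mul]


attribute [local instance] Matrix.linftyOpNormedRing Matrix.linftyOpNormedAlgebra

noncomputable def gMatCLM (Mn Nn : ℕ) (V : Matrix (Fin Mn) (Fin Nn) ℝ) :
    (Fin Mn → ℝ) →L[ℝ] Matrix (Fin Nn) (Fin Nn) ℝ :=
  LinearMap.toContinuousLinearMap
  { toFun := fun v => Vᵀ * diagonal v * V
    map_add' := by
      intro a b
      have h1 : diagonal (a + b) = diagonal a + diagonal b := by
        ext i j; by_cases h : i = j <;> simp [Matrix.diagonal_apply, h]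
      show Vᵀ * diagonal (a + b) * V = _
      rw [h1, Matrix.mul_add, Matrix.add_mul]
    map_smul' := by
      intro c a
      have h1 : diagonal (c • a) = c • diagonal a := by
        ext i j; by_cases h : i = j <;> simp [Matrix.diagonal_apply, h]
      show Vᵀ * diagonal (c • a) * V = _
      rw [h1, Matrix.mul_smul, Matrix.smul_mul]
      rfl }

theorem gMatCLM_apply (Mn Nn : ℕ) (V : Matrix (Fin Mn) (Fin Nn) ℝ) (v : Fin Mn → ℝ) :
    gMatCLM Mn Nn V v = Vᵀ * diagonal v * V := rfl

noncomputable def trB (Nn : ℕ) (B : Matrix (Fin Nn) (Fin Nn) ℝ) :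
    Matrix (Fin Nn) (Fin Nn) ℝ →L[ℝ] ℝ :=
  LinearMap.toContinuousLinearMap
  { toFun := fun z => Matrix.trace (z * B)
    map_add' := fun x y => by show Matrix.trace ((x + y) * B) = _; rw [Matrix.add_mul, Matrix.trace_add]
    map_smul' := fun c x => by show Matrix.trace ((c • x) * B) = _; rw [Matrix.smul_mul, Matrix.trace_smul]; rfl }

theorem trB_apply (Nn : ℕ) (B z : Matrix (Fin Nn) (Fin Nn) ℝ) :
    trB Nn B z = Matrix.trace (z * B) := rfl

theorem fderiv_psi (Mn Nn : ℕ) (V : Matrix (Fin Mn) (Fin Nn) ℝ)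
    (B : Matrix (Fin Nn) (Fin Nn) ℝ) (c : ℝ) (w u : Fin Mn → ℝ)
    (hA : IsUnit (Vᵀ * diagonal w * V)) :
    fderiv ℝ (fun v => -(1 / (Nn : ℝ)) *
        Matrix.trace (Ring.inverse (Vᵀ * diagonal v * V) * B) + c) w u
      = (1 / (Nn : ℝ)) * Matrix.trace
          ((Vᵀ * diagonal w * V)⁻¹ * (Vᵀ * diagonal u * V) * (Vᵀ * diagonal w * V)⁻¹ * B) := by
  have hinv0 := hasFDerivAt_ringInverse (𝕜 := ℝ) hA.unit
  rw [hA.unit_spec] at hinv0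
  have hinv : HasFDerivAt (fun v => Ring.inverse (gMatCLM Mn Nn V v))
      ((-(ContinuousLinearMap.mulLeftRight ℝ _ ↑hA.unit⁻¹ ↑hA.unit⁻¹)).comp
        (gMatCLM Mn Nn V)) w :=
    by have h := hinv0.comp w ((gMatCLM Mn Nn V).hasFDerivAt); exact h
  have h5 := ((trB Nn B).hasFDerivAt).comp w hinv
  have h6 := (h5.const_mul (-(1 / (Nn : ℝ)))).add_const c
  have h7 : HasFDerivAt (fun v => -(1 / (Nn : ℝ)) *
      Matrix.trace (Ring.inverse (Vᵀ * diagonal v * V) * B) + c)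
      (-(1 / (Nn : ℝ)) • (trB Nn B).comp
        ((-(ContinuousLinearMap.mulLeftRight ℝ _ ↑hA.unit⁻¹ ↑hA.unit⁻¹)).comp
          (gMatCLM Mn Nn V))) w := h6
  rw [h7.fderiv]
  show -(1 / (Nn : ℝ)) • trB Nn B (-((↑hA.unit⁻¹ : Matrix (Fin Nn) (Fin Nn) ℝ) *
    gMatCLM Mn Nn V u * (↑hA.unit⁻¹ : Matrix (Fin Nn) (Fin Nn) ℝ))) = _
  rw [trB_apply, gMatCLM_apply]
  rw [show ((↑hA.unit⁻¹ : Matrix (Fin Nn) (Fin Nn) ℝ)) = (Vᵀ * diagonal w * V)⁻¹ by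
    rw [Matrix.coe_units_inv, hA.unit_spec]]
  rw [smul_eq_mul, Matrix.neg_mul, Matrix.trace_neg]
  ring


open scoped MatrixOrder in
theorem trace_key (n : ℕ) (A B : Matrix (Fin n) (Fin n) ℝ) (hA : A.PosDef) (hB : Bᵀ = B) :
    Matrix.trace (A⁻¹ * B * A⁻¹ * B) = 0 ↔ B = 0 := by
  constructor
  · intro htr
    have hAi : A⁻¹.PosDef := hA.inv
    set S := CFC.sqrt A⁻¹ with hSdef
    have hSS : S * S = A⁻¹ := CFC.sqrt_mul_sqrt_self A⁻¹ hAi.posSemidef.nonneg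
    have hSh : Sᴴ = S := (CFC.sqrt_nonneg A⁻¹).posSemidef.1
    have hBh : Bᴴ = B := by
      rw [Matrix.conjTranspose_eq_transpose_of_trivial]; exact hB
    set C := S * B * S with hCdef
    have hCh : Cᴴ = C := by
      rw [hCdef, Matrix.conjTranspose_mul, Matrix.conjTranspose_mul, hSh, hBh]
      rw [Matrix.mul_assoc]
    have hkey : Matrix.trace (Cᴴ * C) = Matrix.trace (A⁻¹ * B * A⁻¹ * B) := by
      rw [hCh, hCdef]
      have : S * B * S * (S * B * S) = S * (B * A⁻¹ * B * S) := by
        rw [← hSS]; noncomm_ring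
      rw [this, Matrix.trace_mul_comm]
      have : B * A⁻¹ * B * S * S = B * A⁻¹ * B * A⁻¹ := by
        rw [← hSS]; noncomm_ring
      rw [this, Matrix.trace_mul_comm]
      noncomm_ring
    rw [htr] at hkey
    have hC0 : C = 0 := by
      have hsum : Matrix.trace (Cᴴ * C) = ∑ i, ∑ j, (C j i) ^ 2 := by
        simp [Matrix.trace, Matrix.diag, Matrix.mul_apply, Matrix.conjTranspose_apply, sq]
      rw [hsum] at hkey
      ext i j
      have h1 : ∀ p ∈ (Finset.univ : Finset (Fin n)), (0:ℝ) ≤ ∑ q, (C q p)^2 :=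
        fun p _ => Finset.sum_nonneg fun q _ => sq_nonneg _
      have h2 := (Finset.sum_eq_zero_iff_of_nonneg h1).mp hkey j (Finset.mem_univ j)
      have h3 := (Finset.sum_eq_zero_iff_of_nonneg
        (fun q _ => sq_nonneg (C q j))).mp h2 i (Finset.mem_univ i)
      exact pow_eq_zero_iff two_ne_zero |>.mp h3
    -- S invertible
    have hdetS : IsUnit S.det := by
      have : S.det * S.det = A⁻¹.det := by rw [← Matrix.det_mul, hSS]
      have hAd : A⁻¹.det ≠ 0 := ne_of_gt hAi.det_pos
      refine isUnit_iff_ne_zero.mpr fun h => hAd ?_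
      rw [← this, h, mul_zero]
    have hB' : B = S⁻¹ * C * S⁻¹ := by
      rw [hCdef]
      rw [show S⁻¹ * (S * B * S) * S⁻¹ = S⁻¹ * S * B * (S * S⁻¹) by noncomm_ring]
      rw [Matrix.nonsing_inv_mul _ hdetS, Matrix.mul_nonsing_inv _ hdetS, Matrix.one_mul,
        Matrix.mul_one]
    rw [hB', hC0, Matrix.mul_zero, Matrix.zero_mul]
  · intro h; rw [h]; simp


theorem stmt_7 (M N : ℕ) (hN : 0 < N) (hMN : N ≤ M)
    (V : Matrix (Fin M) (Fin N) ℝ) (hV : V.rank = N)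
    (G : (Fin M → ℝ) → Matrix (Fin N) (Fin N) ℝ)
    (hG : ∀ w, G w = Vᵀ * diagonal w * V)
    (E : (Fin M → ℝ) → ℝ)
    (hE : ∀ w, E w = -(1 / (N : ℝ)) * Real.log (G w).det + ∑ i, w i)
    (w : Fin M → ℝ) (hwpos : ∀ i, 0 ≤ w i) (hw : (G w).PosDef)
    (u : Fin M → ℝ) :
    fderiv ℝ (fun v => fderiv ℝ E v u) w u = 0 ↔
      Vᵀ * diagonal u * V = 0 := by
  have hwA : (Vᵀ * diagonal w * V).PosDef := by rw [← hG w]; exact hw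
  have hdetA : (Vᵀ * diagonal w * V).det ≠ 0 := ne_of_gt hwA.det_pos
  have hEfun : ∀ v, E v = -(1 / (N : ℝ)) * Real.log (Vᵀ * diagonal v * V).det + ∑ i, v i :=
    fun v => by rw [hE v, hG v]
  have hnb : ∀ᶠ v in nhds w, (Vᵀ * diagonal v * V).det ≠ 0 :=
    (hasFDerivAt_detG M N V w).continuousAt.eventually_ne hdetA
  have heq : (fun v => fderiv ℝ E v u) =ᶠ[nhds w]
      (fun v => -(1 / (N : ℝ)) *
        Matrix.trace (Ring.inverse (Vᵀ * diagonal v * V) * (Vᵀ * diagonal u * V)) + ∑ i, u i) :=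
    hnb.mono fun v hv => fderiv_E_eq M N V E hEfun v hv u
  have hAu : IsUnit (Vᵀ * diagonal w * V) :=
    (Matrix.isUnit_iff_isUnit_det _).mpr (isUnit_iff_ne_zero.mpr hdetA)
  have hval : fderiv ℝ (fun v => fderiv ℝ E v u) w u
      = (1 / (N : ℝ)) * Matrix.trace ((Vᵀ * diagonal w * V)⁻¹ * (Vᵀ * diagonal u * V) *
          (Vᵀ * diagonal w * V)⁻¹ * (Vᵀ * diagonal u * V)) := by
    rw [heq.fderiv_eq]
    exact fderiv_psi M N V (Vᵀ * diagonal u * V) (∑ i, u i) w u hAu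
  rw [hval]
  have hBt : (Vᵀ * diagonal u * V)ᵀ = Vᵀ * diagonal u * V := by
    rw [Matrix.transpose_mul, Matrix.transpose_mul, Matrix.transpose_transpose,
      Matrix.diagonal_transpose, Matrix.mul_assoc]
  have hNe : (1 / (N : ℝ)) ≠ 0 := one_div_ne_zero (Nat.cast_ne_zero.mpr hN.ne')
  rw [mul_eq_zero]
  constructor
  · rintro (h | h)
    · exact absurd h hNe
    · exact (trace_key N _ _ hwA hBt).mp h
  · intro h
    exact Or.inr ((trace_key N _ _ hwA hBt).mpr h)
end

section
/- Let V be a real M×N matrix of full column rank N, G(w) := Vᵀ·diag(w)·V, and E(w) := −(1/N)·log(det G(w)) + Σᵢ wᵢ. If w* and v* both minimize E over the nonnegative orthant {w ∈ ℝ^M : wᵢ ≥ 0 for all i}, then w* − v* ∈ K := {u ∈ ℝ^M : Vᵀ·diag(u)·V = 0}; in particular, all minimizers of E have the same information matrix: G(w*) = G(v*). -/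
open Matrix

lemma aux_posDef_of_det {n : Type*} [Fintype n] [DecidableEq n] {A : Matrix n n ℝ}
    (hA : A.PosSemidef) (hd : A.det ≠ 0) : A.PosDef := by
  exact hA.posDef_iff_det_ne_zero.mpr hd

lemma aux_eig {N : ℕ} {C : Matrix (Fin N) (Fin N) ℝ} (hC : C.PosDef) :
    C.det = ∏ i, hC.1.eigenvalues i ∧
    (1 + C).det = ∏ i, (1 + hC.1.eigenvalues i) ∧
    ((∀ i, hC.1.eigenvalues i = 1) → C = 1) := by
  have hspec := hC.1.spectral_theorem
  rw [Unitary.conjStarAlgAut_apply] at hspec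
  set U : Matrix (Fin N) (Fin N) ℝ := (hC.1.eigenvectorUnitary : Matrix (Fin N) (Fin N) ℝ) with hU
  have hUU : U * star U = 1 := (Matrix.mem_unitaryGroup_iff).mp hC.1.eigenvectorUnitary.2
  have hd : (RCLike.ofReal ∘ hC.1.eigenvalues : Fin N → ℝ) = hC.1.eigenvalues := by
    funext i; simp
  rw [hd] at hspec
  have h1C : 1 + C = U * (1 + diagonal hC.1.eigenvalues) * star U := by
    rw [Matrix.mul_add, Matrix.add_mul, Matrix.mul_one, hUU, ← hspec]
  refine ⟨?_, ?_, fun h => ?_⟩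
  · have h2 := congrArg det hspec
    rw [det_mul_right_comm, hUU, Matrix.one_mul, det_diagonal] at h2
    exact h2
  · have h2 := congrArg det h1C
    rw [det_mul_right_comm, hUU, Matrix.one_mul, ← diagonal_one, diagonal_add, det_diagonal] at h2
    simpa using h2
  · have hone : diagonal hC.1.eigenvalues = 1 := by
      rw [show hC.1.eigenvalues = fun _ => (1:ℝ) from funext h]
      exact diagonal_one
    rw [hspec, hone, Matrix.mul_one, hUU]

lemma aux_amgm {x : ℝ} (hx : 0 < x) : Real.log x ≤ 2 * Real.log (2⁻¹ * (1 + x)) := by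
  have h2 : (0:ℝ) < 2⁻¹ * (1 + x) := by positivity
  have hle : x ≤ (2⁻¹ * (1 + x))^2 := by nlinarith [sq_nonneg (x - 1)]
  calc Real.log x ≤ Real.log ((2⁻¹ * (1 + x))^2) := Real.log_le_log hx hle
    _ = 2 * Real.log (2⁻¹ * (1 + x)) := by rw [Real.log_pow]; norm_num

lemma aux_amgm_eq {x : ℝ} (hx : 0 < x) (h : 2 * Real.log (2⁻¹ * (1 + x)) = Real.log x) :
    x = 1 := by
  have h2 : (0:ℝ) < 2⁻¹ * (1 + x) := by positivity
  have hlog : Real.log ((2⁻¹ * (1 + x))^2) = Real.log x := by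
    rw [Real.log_pow]; push_cast; linarith
  have := congrArg Real.exp hlog
  rw [Real.exp_log (by positivity), Real.exp_log hx] at this
  nlinarith

open scoped MatrixOrder in
lemma aux_key {N : ℕ} {A B : Matrix (Fin N) (Fin N) ℝ} (hA : A.PosDef) (hB : B.PosDef)
    (h : 2 * Real.log ((2⁻¹ : ℝ) • (A + B)).det ≤ Real.log A.det + Real.log B.det) :
    A = B := by
  classical
  set S := CFC.sqrt A with hSdef
  have hSS : S * S = A := CFC.sqrt_mul_sqrt_self A hA.posSemidef.nonneg
  have hherm : Sᴴ = S := (Matrix.nonneg_iff_posSemidef.mp (CFC.sqrt_nonneg A)).1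
  have hdA : 0 < A.det := hA.det_pos
  have hdS : S.det ≠ 0 := fun h0 => hdA.ne' (by rw [← hSS, det_mul, h0, mul_zero])
  have hSu : IsUnit S.det := Ne.isUnit hdS
  set C := S⁻¹ * B * S⁻¹ with hCdef
  have hSinv : (S⁻¹)ᴴ = S⁻¹ := by rw [conjTranspose_nonsing_inv, hherm]
  have hCpsd : C.PosSemidef := by
    have := hB.posSemidef.conjTranspose_mul_mul_same S⁻¹
    rwa [hSinv] at this
  have hSi : S⁻¹.det = S.det⁻¹ := by rw [det_nonsing_inv, Ring.inverse_eq_inv']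
  have hdC : C.det ≠ 0 := by
    rw [hCdef, det_mul, det_mul, hSi]
    exact mul_ne_zero (mul_ne_zero (inv_ne_zero hdS) hB.det_pos.ne') (inv_ne_zero hdS)
  have hC : C.PosDef := aux_posDef_of_det hCpsd hdC
  have hB' : S * C * S = B := by
    calc S * (S⁻¹ * B * S⁻¹) * S = S * (S⁻¹ * (B * (S⁻¹ * S))) := by
          simp only [Matrix.mul_assoc]
      _ = B := by
          rw [nonsing_inv_mul _ hSu, Matrix.mul_one, ← Matrix.mul_assoc,
            mul_nonsing_inv _ hSu, Matrix.one_mul]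
  have hmid : (2⁻¹:ℝ) • (A + B) = S * ((2⁻¹:ℝ) • (1 + C)) * S := by
    rw [mul_smul_comm, smul_mul_assoc]
    congr 1
    rw [Matrix.mul_add, Matrix.add_mul, Matrix.mul_one, hSS, hB']
  have hdetA : A.det = S.det * S.det := by rw [← hSS, det_mul]
  have hdetB : B.det = S.det * S.det * C.det := by rw [← hB', det_mul, det_mul]; ring
  have hdetM : ((2⁻¹:ℝ) • (A+B)).det = S.det * S.det * ((2⁻¹:ℝ) • (1+C)).det := by
    rw [hmid, det_mul, det_mul]; ring
  obtain ⟨e1, e2, e3⟩ := aux_eig hC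
  have hμ : ∀ i, 0 < hC.1.eigenvalues i := hC.eigenvalues_pos
  set μ := hC.1.eigenvalues with hμdef
  have hdet1C : ((2⁻¹:ℝ) • (1+C)).det = ∏ i, (2⁻¹ * (1 + μ i)) := by
    rw [det_smul, e2, Finset.prod_mul_distrib, Finset.prod_const, Finset.card_univ]
  have hSS2 : (0:ℝ) < S.det * S.det := by rw [← hdetA]; exact hdA
  have hfpos : ∀ i ∈ Finset.univ, (2⁻¹ * (1 + μ i) : ℝ) ≠ 0 := by
    intro i _; have := hμ i; positivity
  have hμne : ∀ i ∈ Finset.univ, (μ i : ℝ) ≠ 0 := fun i _ => (hμ i).ne'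
  rw [hdetM, hdet1C, hdetA, hdetB, e1,
    Real.log_mul hSS2.ne' (Finset.prod_ne_zero_iff.mpr hfpos),
    Real.log_mul hSS2.ne' (Finset.prod_ne_zero_iff.mpr hμne),
    Real.log_prod hfpos, Real.log_prod hμne] at h
  have hsum : ∑ i, (2 * Real.log (2⁻¹ * (1 + μ i)) - Real.log (μ i)) ≤ 0 := by
    rw [Finset.sum_sub_distrib, ← Finset.mul_sum]
    linarith
  have hterm : ∀ i ∈ Finset.univ, (0:ℝ) ≤ 2 * Real.log (2⁻¹ * (1 + μ i)) - Real.log (μ i) :=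
    fun i _ => by linarith [aux_amgm (hμ i)]
  have hall : ∀ i ∈ Finset.univ, 2 * Real.log (2⁻¹ * (1 + μ i)) - Real.log (μ i) = 0 := by
    rw [← Finset.sum_eq_zero_iff_of_nonneg hterm]
    exact le_antisymm hsum (Finset.sum_nonneg hterm)
  have hμ1 : ∀ i, μ i = 1 := fun i =>
    aux_amgm_eq (hμ i) (by linarith [hall i (Finset.mem_univ i)])
  have hC1 : C = 1 := e3 hμ1
  rw [← hB', hC1, Matrix.mul_one, hSS]

lemma aux_posDef_smul {n : Type*} [Fintype n] {A : Matrix n n ℝ}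
    (hA : A.PosDef) {c : ℝ} (hc : 0 < c) : (c • A).PosDef := by
  exact hA.smul hc

theorem stmt_9 (M N : ℕ) (hN : 0 < N) (hMN : N ≤ M)
    (V : Matrix (Fin M) (Fin N) ℝ) (hV : V.rank = N)
    (G : (Fin M → ℝ) → Matrix (Fin N) (Fin N) ℝ)
    (hG : ∀ w, G w = Vᵀ * diagonal w * V)
    (E : (Fin M → ℝ) → ℝ)
    (hE : ∀ w, E w = -(1 / (N : ℝ)) * Real.log (G w).det + ∑ i, w i)
    (w₀ v₀ : Fin M → ℝ)
    (hw₀mem : w₀ ∈ {w : Fin M → ℝ | (∀ i, 0 ≤ w i) ∧ 0 < (G w).det})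
    (hw₀min : IsMinOn E {w : Fin M → ℝ | (∀ i, 0 ≤ w i) ∧ 0 < (G w).det} w₀)
    (hv₀mem : v₀ ∈ {w : Fin M → ℝ | (∀ i, 0 ≤ w i) ∧ 0 < (G w).det})
    (hv₀min : IsMinOn E {w : Fin M → ℝ | (∀ i, 0 ≤ w i) ∧ 0 < (G w).det} v₀) :
    Vᵀ * diagonal (w₀ - v₀) * V = 0 ∧ G w₀ = G v₀ := by
  classical
  obtain ⟨hw0, hwdet⟩ := hw₀mem
  obtain ⟨hv0, hvdet⟩ := hv₀mem
  have hpsd : ∀ w : Fin M → ℝ, (∀ i, 0 ≤ w i) → (G w).PosSemidef := by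
    intro w hw
    rw [hG w]
    have := (Matrix.PosSemidef.diagonal (fun i => hw i) :
      (diagonal w).PosSemidef).conjTranspose_mul_mul_same V
    rwa [conjTranspose_eq_transpose_of_trivial] at this
  have hwPD : (G w₀).PosDef := aux_posDef_of_det (hpsd w₀ hw0) hwdet.ne'
  have hvPD : (G v₀).PosDef := aux_posDef_of_det (hpsd v₀ hv0) hvdet.ne'
  have hGm : G ((2⁻¹:ℝ) • (w₀ + v₀)) = (2⁻¹:ℝ) • (G w₀ + G v₀) := by
    rw [hG, hG, hG]
    have hdiag : diagonal ((2⁻¹:ℝ) • (w₀ + v₀)) = (2⁻¹:ℝ) • (diagonal w₀ + diagonal v₀) := by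
      rw [diagonal_smul, diagonal_add]
      rfl
    rw [hdiag]
    simp only [Matrix.smul_mul, Matrix.mul_smul, Matrix.mul_add, Matrix.add_mul]
  have hGmPD : ((2⁻¹:ℝ) • (G w₀ + G v₀)).PosDef := aux_posDef_smul (hwPD.add hvPD) (by norm_num)
  have hmmem : (2⁻¹:ℝ) • (w₀ + v₀) ∈ {w : Fin M → ℝ | (∀ i, 0 ≤ w i) ∧ 0 < (G w).det} := by
    constructor
    · intro i
      simp only [Pi.smul_apply, Pi.add_apply, smul_eq_mul]
      have := hw0 i; have := hv0 i; linarith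
    · rw [hGm]; exact hGmPD.det_pos
  have h1 : E w₀ ≤ E ((2⁻¹:ℝ) • (w₀ + v₀)) := hw₀min hmmem
  have h2 : E v₀ ≤ E ((2⁻¹:ℝ) • (w₀ + v₀)) := hv₀min hmmem
  have hsum : ∑ i, ((2⁻¹:ℝ) • (w₀ + v₀)) i = 2⁻¹ * (∑ i, w₀ i) + 2⁻¹ * (∑ i, v₀ i) := by
    simp only [Pi.smul_apply, Pi.add_apply, smul_eq_mul]
    rw [Finset.mul_sum, Finset.mul_sum, ← Finset.sum_add_distrib]
    exact Finset.sum_congr rfl fun i _ => by ring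
  rw [hE, hE, hGm, hsum] at h1 h2
  have hNpos : (0:ℝ) < (N:ℝ) := Nat.cast_pos.mpr hN
  have hinv : (0:ℝ) < 1 / (N:ℝ) := by positivity
  set a := Real.log (G w₀).det with ha
  set b := Real.log (G v₀).det with hb
  set c := Real.log ((2⁻¹:ℝ) • (G w₀ + G v₀)).det with hc
  have ht : (1/(N:ℝ)) * (2*c) ≤ (1/(N:ℝ)) * (a+b) := by linarith
  have hkey : 2*c ≤ a + b := le_of_mul_le_mul_left ht hinv
  have hGG : G w₀ = G v₀ := aux_key hwPD hvPD hkey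
  refine ⟨?_, hGG⟩
  have hsub : Vᵀ * diagonal (w₀ - v₀) * V = G w₀ - G v₀ := by
    have hdsub : diagonal (w₀ - v₀) = diagonal w₀ - diagonal v₀ := by
      ext i j
      rcases eq_or_ne i j with rfl | hij
      · simp
      · simp [diagonal_apply_ne _ hij]
    rw [hG, hG, hdsub, Matrix.mul_sub, Matrix.sub_mul]
  rw [hsub, hGG, sub_self]
end

section
/- Let V be a real M×N matrix of full column rank N, G(w) := Vᵀ·diag(w)·V, and E(w) := −(1/N)·log(det G(w)) + Σᵢ wᵢ. Let w* ∈ ℝ^M satisfy: w*ᵢ ≥ 0 for all i, G(w*) is positive definite, ∂E/∂wᵢ(w*) = 0 for every i with w*ᵢ > 0, and ∂E/∂wᵢ(w*) ≥ 0 for every i with w*ᵢ = 0. Then w* minimizes E over the nonnegative orthant {w ∈ ℝ^M : wᵢ ≥ 0 for all i}. -/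
open Matrix

lemma trace_eq_sum_eig {n : Type*} [Fintype n] [DecidableEq n] {A : Matrix n n ℝ}
    (hA : A.IsHermitian) : A.trace = ∑ i, hA.eigenvalues i := by
  conv_lhs => rw [hA.spectral_theorem, Unitary.conjStarAlgAut_apply]
  rw [trace_mul_comm, ← mul_assoc]
  rw [show (star (hA.eigenvectorUnitary : Matrix n n ℝ)) * (hA.eigenvectorUnitary : Matrix n n ℝ) = 1 from Unitary.coe_star_mul_self _]
  simp [trace_diagonal]

lemma logdet_le {n : Type*} [Fintype n] [DecidableEq n] {A B : Matrix n n ℝ}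
    (hA : A.PosDef) (hB : B.PosSemidef) (hdB : 0 < B.det) :
    Real.log B.det ≤ Real.log A.det + ((A⁻¹ * B).trace - (Fintype.card n : ℝ)) := by
  obtain ⟨S, hS, hSS⟩ : ∃ S : Matrix n n ℝ, S.PosSemidef ∧ S * S = A := by
    open scoped MatrixOrder in
    exact ⟨CFC.sqrt A, nonneg_iff_posSemidef.mp (CFC.sqrt_nonneg A),
      CFC.sqrt_mul_sqrt_self A (nonneg_iff_posSemidef.mpr hA.posSemidef)⟩
  have hdetS : S.det * S.det = A.det := by rw [← det_mul, hSS]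
  have hdetA : 0 < A.det := hA.det_pos
  have hdetSne : S.det ≠ 0 := by
    intro h; rw [h, mul_zero] at hdetS; exact hdetA.ne' hdetS.symm
  have hSinvH : (S⁻¹).IsHermitian := hS.1.inv
  set C := S⁻¹ * B * S⁻¹ with hCdef
  have hC : C.PosSemidef := by
    have := hB.conjTranspose_mul_mul_same S⁻¹
    rwa [hSinvH.eq] at this
  have hdetC : C.det = B.det / A.det := by
    rw [hCdef, det_mul, det_mul, det_nonsing_inv, Ring.inverse_eq_inv]
    rw [eq_div_iff hdetA.ne', ← hdetS]
    field_simp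
  have hdetCpos : 0 < C.det := by rw [hdetC]; positivity
  have heigpos : ∀ i, 0 < hC.1.eigenvalues i := by
    intro i
    rcases lt_or_eq_of_le (hC.eigenvalues_nonneg i) with h | h
    · exact h
    · exfalso
      have hd : C.det = ∏ j, (hC.1.eigenvalues j : ℝ) := hC.1.det_eq_prod_eigenvalues
      rw [Finset.prod_eq_zero (Finset.mem_univ i) (by exact h.symm)] at hd
      exact hdetCpos.ne' (hd ▸ rfl)
  have hlog : Real.log C.det ≤ C.trace - (Fintype.card n : ℝ) := by
    rw [hC.1.det_eq_prod_eigenvalues, trace_eq_sum_eig hC.1]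
    simp only [RCLike.ofReal_real_eq_id, id_eq]
    rw [Real.log_prod (fun i _ => (heigpos i).ne')]
    have : ∀ i ∈ Finset.univ, Real.log (hC.1.eigenvalues i) ≤ hC.1.eigenvalues i - 1 :=
      fun i _ => Real.log_le_sub_one_of_pos (heigpos i)
    calc ∑ i, Real.log (hC.1.eigenvalues i) ≤ ∑ i, (hC.1.eigenvalues i - 1) :=
          Finset.sum_le_sum this
      _ = ∑ i, hC.1.eigenvalues i - (Fintype.card n : ℝ) := by
          rw [Finset.sum_sub_distrib]; simp
  have htrace : C.trace = (A⁻¹ * B).trace := by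
    have hAinv : A⁻¹ = S⁻¹ * S⁻¹ := by rw [← hSS, Matrix.mul_inv_rev]
    rw [hCdef, trace_mul_comm, ← mul_assoc, ← hAinv]
  have hlogC : Real.log C.det = Real.log B.det - Real.log A.det := by
    rw [hdetC, Real.log_div hdB.ne' hdetA.ne']
  rw [hlogC, htrace] at hlog
  linarith

lemma trace_diag_mul {m : Type*} [Fintype m] [DecidableEq m] (w : m → ℝ) (B : Matrix m m ℝ) :
    (diagonal w * B).trace = ∑ i, w i * B i i := by
  simp [Matrix.trace, Matrix.diag, Matrix.diagonal_mul]

lemma trace_A_G {M N : ℕ} (V : Matrix (Fin M) (Fin N) ℝ) (A : Matrix (Fin N) (Fin N) ℝ)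
    (w : Fin M → ℝ) :
    (A * (Vᵀ * diagonal w * V)).trace = ∑ i, w i * (V * A * Vᵀ) i i := by
  rw [show A * (Vᵀ * diagonal w * V) = (A * Vᵀ * diagonal w) * V by
    simp only [Matrix.mul_assoc]]
  rw [trace_mul_comm, show V * (A * Vᵀ * diagonal w) = (V * A * Vᵀ) * diagonal w by
    simp only [Matrix.mul_assoc]]
  rw [trace_mul_comm, trace_diag_mul]

lemma G_single {M N : ℕ} (V : Matrix (Fin M) (Fin N) ℝ) (i : Fin M) (t : ℝ) :
    Vᵀ * diagonal (t • (Pi.single i 1 : Fin M → ℝ)) * V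
      = replicateCol Unit (fun a => t * V i a) * replicateRow Unit (fun b => V i b) := by
  ext a b
  simp only [Matrix.mul_apply, Matrix.transpose_apply, Matrix.diagonal_apply,
    Matrix.replicateCol_apply, Matrix.replicateRow_apply, Pi.smul_apply, Pi.single_apply, smul_eq_mul]
  simp [mul_ite, ite_mul, mul_zero, zero_mul, mul_one, Finset.sum_ite_eq, Finset.sum_ite_eq']
  exact Or.inl (mul_comm _ _)

lemma det_G_line {M N : ℕ} (V : Matrix (Fin M) (Fin N) ℝ) (w : Fin M → ℝ) (i : Fin M) (t : ℝ)
    (h : IsUnit (Vᵀ * diagonal w * V).det) :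
    (Vᵀ * diagonal (w + t • (Pi.single i 1 : Fin M → ℝ)) * V).det
      = (Vᵀ * diagonal w * V).det
        * (1 + t * (V * (Vᵀ * diagonal w * V)⁻¹ * Vᵀ) i i) := by
  have hd : diagonal (w + t • (Pi.single i 1 : Fin M → ℝ)) = diagonal w + diagonal (t • (Pi.single i 1 : Fin M → ℝ)) :=
    by ext a b; by_cases h : a = b <;> simp [Matrix.diagonal_apply, h]
  rw [hd, Matrix.mul_add, Matrix.add_mul, G_single, det_add_replicateCol_mul_replicateRow h]
  congr 1
  rw [det_unique]
  simp only [Matrix.add_apply, Matrix.one_apply_eq, Matrix.mul_apply, Matrix.replicateRow_apply,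
    Matrix.replicateCol_apply]
  congr 1
  simp only [Matrix.mul_apply, Matrix.transpose_apply, Finset.mul_sum, Finset.sum_mul]
  rw [Finset.sum_comm]
  have hsymG : (Vᵀ * diagonal w * V)ᵀ = Vᵀ * diagonal w * V := by
    rw [Matrix.transpose_mul, Matrix.transpose_mul, transpose_transpose, diagonal_transpose,
      Matrix.mul_assoc]
  have hsyminv : ∀ a b : Fin N, (Vᵀ * diagonal w * V)⁻¹ b a = (Vᵀ * diagonal w * V)⁻¹ a b := by
    intro a b
    conv_lhs => rw [show (Vᵀ * diagonal w * V)⁻¹ b a = ((Vᵀ * diagonal w * V)⁻¹)ᵀ a b from rfl,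
      Matrix.transpose_nonsing_inv, hsymG]
  congr 1; ext a; congr 1; ext b
  rw [hsyminv a b]
  ring

theorem stmt_16 (M N : ℕ) (hN : 0 < N) (hMN : N ≤ M)
    (V : Matrix (Fin M) (Fin N) ℝ) (hV : V.rank = N)
    (G : (Fin M → ℝ) → Matrix (Fin N) (Fin N) ℝ)
    (hG : ∀ w, G w = Vᵀ * diagonal w * V)
    (E : (Fin M → ℝ) → ℝ)
    (hE : ∀ w, E w = -(1 / (N : ℝ)) * Real.log (G w).det + ∑ i, w i)
    (w₀ : Fin M → ℝ)
    (h1 : ∀ i, 0 ≤ w₀ i) (h2 : (G w₀).PosDef)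
    (h3 : ∀ i, 0 < w₀ i → fderiv ℝ E w₀ (Pi.single i 1) = 0)
    (h4 : ∀ i, w₀ i = 0 → 0 ≤ fderiv ℝ E w₀ (Pi.single i 1)) :
    IsMinOn E {w : Fin M → ℝ | (∀ i, 0 ≤ w i) ∧ 0 < (G w).det} w₀ := by
  have hNR : (0:ℝ) < (N:ℝ) := by exact_mod_cast hN
  set c : Fin M → ℝ := fun i => (V * (G w₀)⁻¹ * Vᵀ) i i with hc
  have hdet0 : 0 < (G w₀).det := h2.det_pos
  have hunit : IsUnit (G w₀).det := isUnit_iff_ne_zero.mpr hdet0.ne'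
  -- differentiability of the determinant along w
  have hentry : ∀ a b : Fin N,
      Differentiable ℝ (fun w : Fin M → ℝ => (Vᵀ * diagonal w * V) a b) := by
    intro a b
    have heq : (fun w : Fin M → ℝ => (Vᵀ * diagonal w * V) a b)
        = fun w => ∑ k, V k a * w k * V k b := by
      funext w
      simp [Matrix.mul_apply, Matrix.diagonal_apply, mul_ite, ite_mul, mul_zero, zero_mul,
        Finset.sum_ite_eq, Finset.sum_ite_eq']
    rw [heq]
    exact Differentiable.fun_sum fun k _ =>
      (((ContinuousLinearMap.proj k :
          (Fin M → ℝ) →L[ℝ] ℝ).differentiable).const_mul (V k a)).mul_const (V k b)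
  have hfdiff : Differentiable ℝ (fun w : Fin M → ℝ => (Vᵀ * diagonal w * V).det) := by
    have heq : (fun w : Fin M → ℝ => (Vᵀ * diagonal w * V).det)
        = fun w => ∑ σ : Equiv.Perm (Fin N),
            ((Equiv.Perm.sign σ : ℤ) : ℝ) * ∏ j, (Vᵀ * diagonal w * V) (σ j) j := by
      funext w
      rw [Matrix.det_apply]
      apply Finset.sum_congr rfl
      intro σ _
      rw [Units.smul_def, zsmul_eq_mul]
    rw [heq]
    apply Differentiable.fun_sum
    intro σ _
    apply Differentiable.const_mul
    have hprod : ∀ s : Finset (Fin N),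
        Differentiable ℝ fun w : Fin M → ℝ => ∏ j ∈ s, (Vᵀ * diagonal w * V) (σ j) j := by
      intro s
      induction s using Finset.induction with
      | empty => simp only [Finset.prod_empty]; exact differentiable_const (1:ℝ)
      | @insert a s ha ih =>
        simp only [Finset.prod_insert ha]
        exact (hentry _ _).mul ih
    exact hprod Finset.univ
  have hEfun : E = fun w => -(1/(N:ℝ)) * Real.log ((Vᵀ * diagonal w * V).det) + ∑ i, w i := by
    funext w; rw [hE w, hG w]
  have hEdiff : DifferentiableAt ℝ E w₀ := by
    rw [hEfun]
    apply DifferentiableAt.add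
    · apply DifferentiableAt.const_mul
      have hne : (Vᵀ * diagonal w₀ * V).det ≠ 0 := by rw [← hG w₀]; exact hdet0.ne'
      exact (Real.differentiableAt_log hne).comp w₀ (hfdiff w₀)
    · exact (Differentiable.fun_sum fun i _ =>
        (ContinuousLinearMap.proj i : (Fin M → ℝ) →L[ℝ] ℝ).differentiable).differentiableAt
  -- directional derivative formula
  have hfd : ∀ i, fderiv ℝ E w₀ (Pi.single i 1) = 1 - c i / (N:ℝ) := by
    intro i
    have hline : HasDerivAt (fun t : ℝ => w₀ + t • (Pi.single i 1 : Fin M → ℝ))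
        (Pi.single i 1) 0 := by
      simpa using ((hasDerivAt_id (0:ℝ)).smul_const (Pi.single i 1 : Fin M → ℝ)).const_add w₀
    have hcomp : HasDerivAt (fun t : ℝ => E (w₀ + t • (Pi.single i 1 : Fin M → ℝ)))
        (fderiv ℝ E w₀ (Pi.single i 1)) 0 := by
      have h0 : w₀ + (0:ℝ) • (Pi.single i 1 : Fin M → ℝ) = w₀ := by simp
      have hF : HasFDerivAt E (fderiv ℝ E w₀) (w₀ + (0:ℝ) • (Pi.single i 1 : Fin M → ℝ)) := by
        rw [h0]; exact hEdiff.hasFDerivAt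
      exact hF.comp_hasDerivAt 0 hline
    have hfun : (fun t : ℝ => E (w₀ + t • (Pi.single i 1 : Fin M → ℝ)))
        = fun t => -(1/(N:ℝ)) * Real.log ((G w₀).det * (1 + t * c i)) + ((∑ j, w₀ j) + t) := by
      funext t
      rw [hE, hG]
      have hdet := det_G_line V w₀ i t (by rw [← hG w₀]; exact hunit)
      rw [hdet, ← hG w₀]
      congr 1
      simp [Finset.sum_add_distrib, ← Finset.mul_sum, Finset.sum_pi_single']
    have hg : HasDerivAt
        (fun t : ℝ => -(1/(N:ℝ)) * Real.log ((G w₀).det * (1 + t * c i)) + ((∑ j, w₀ j) + t))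
        (-(1/(N:ℝ)) * c i + 1) 0 := by
      have hinner : HasDerivAt (fun t : ℝ => (G w₀).det * (1 + t * c i)) ((G w₀).det * c i) 0 := by
        have h' : HasDerivAt (fun t : ℝ => 1 + t * c i) (c i) 0 :=
          (hasDerivAt_mul_const (c i)).const_add 1
        simpa using h'.const_mul ((G w₀).det)
      have hne : (G w₀).det * (1 + (0:ℝ) * c i) ≠ 0 := by simpa using hdet0.ne'
      have hlog : HasDerivAt (fun t : ℝ => Real.log ((G w₀).det * (1 + t * c i)))
          (((G w₀).det * (1 + (0:ℝ) * c i))⁻¹ * ((G w₀).det * c i)) 0 :=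
        HasDerivAt.comp (0:ℝ) (Real.hasDerivAt_log hne) hinner
      have hsum : HasDerivAt (fun t : ℝ => (∑ j, w₀ j) + t) 1 0 :=
        (hasDerivAt_id 0).const_add _
      have := (hlog.const_mul (-(1/(N:ℝ)))).fun_add hsum
      rw [zero_mul, add_zero, mul_one, inv_mul_cancel_left₀ hdet0.ne'] at this
      exact this
    rw [hfun] at hcomp
    have huniq := hcomp.unique hg
    rw [huniq]; ring
  -- main inequality
  intro w hw
  simp only [Set.mem_setOf_eq] at hw
  obtain ⟨hw1, hw2⟩ := hw
  have hwpsd : (G w).PosSemidef := by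
    rw [hG w]
    have hD : (diagonal w).PosSemidef := posSemidef_diagonal_iff.mpr hw1
    have := hD.conjTranspose_mul_mul_same V
    rwa [conjTranspose_eq_transpose_of_trivial] at this
  have hlog := logdet_le h2 hwpsd hw2
  simp only [Fintype.card_fin] at hlog
  have hTw : ((G w₀)⁻¹ * G w).trace = ∑ i, w i * c i := by
    have := trace_A_G V ((G w₀)⁻¹) w
    rwa [← hG w] at this
  have hT0 : ((G w₀)⁻¹ * G w₀).trace = ∑ i, w₀ i * c i := by
    have := trace_A_G V ((G w₀)⁻¹) w₀
    rwa [← hG w₀] at this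
  have hNeq : (∑ i, w₀ i * c i) = (N:ℝ) := by
    rw [← hT0, nonsing_inv_mul _ hunit, trace_one]
    simp
  rw [hTw] at hlog
  -- sum of KKT terms is nonneg
  have hsum : 0 ≤ ∑ i, (w i - w₀ i) * (1 - c i / (N:ℝ)) := by
    apply Finset.sum_nonneg
    intro i _
    rcases eq_or_lt_of_le (h1 i) with h | h
    · have hd := h4 i h.symm
      rw [hfd i] at hd
      have hwi := hw1 i
      rw [← h]
      have : w i - 0 = w i := by ring
      rw [this]
      exact mul_nonneg hwi hd
    · have hd := h3 i h
      rw [hfd i] at hd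
      rw [hd, mul_zero]
  have hexp : ∑ i, (w i - w₀ i) * (1 - c i / (N:ℝ))
      = (∑ i, w i - ∑ i, w₀ i) - ((∑ i, w i * c i) - (∑ i, w₀ i * c i)) / (N:ℝ) := by
    have hterm : ∀ i : Fin M, (w i - w₀ i) * (1 - c i / (N:ℝ))
        = (w i - w₀ i) - (w i * c i - w₀ i * c i) / (N:ℝ) := by
      intro i; field_simp
    simp_rw [hterm]
    rw [Finset.sum_sub_distrib, Finset.sum_sub_distrib, ← Finset.sum_div, Finset.sum_sub_distrib]
  have hsum' : (∑ i, w i * c i) - (∑ i, w₀ i * c i) ≤ (∑ i, w i - ∑ i, w₀ i) * (N:ℝ) := by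
    rw [hexp] at hsum
    have h' : ((∑ i, w i * c i) - (∑ i, w₀ i * c i)) / (N:ℝ) ≤ (∑ i, w i - ∑ i, w₀ i) := by
      linarith
    exact (div_le_iff₀ hNR).mp h'
  have hfinal : Real.log (G w).det - Real.log (G w₀).det
      ≤ (∑ i, w i - ∑ i, w₀ i) * (N:ℝ) := by
    have : (∑ i, w i * c i) - (N:ℝ) = (∑ i, w i * c i) - (∑ i, w₀ i * c i) := by rw [hNeq]
    linarith
  -- conclude
  show E w₀ ≤ E w
  rw [hE w, hE w₀]
  have h0 : (0:ℝ) < 1/(N:ℝ) := by positivity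
  have hm := mul_le_mul_of_nonneg_left hfinal (le_of_lt h0)
  have hr : (1/(N:ℝ)) * ((∑ i, w i - ∑ i, w₀ i) * (N:ℝ)) = (∑ i, w i - ∑ i, w₀ i) := by
    field_simp
  have hl : (1/(N:ℝ)) * (Real.log (G w).det - Real.log (G w₀).det)
      = (1/(N:ℝ)) * Real.log (G w).det - (1/(N:ℝ)) * Real.log (G w₀).det := by ring
  rw [hr, hl] at hm
  linarith
end

section
/- Let V be a real M×N matrix (M ≥ N ≥ 1) of full column rank N and G(w) := Vᵀ·diag(w)·V. If w* maximizes det G(w) over the simplex {w ∈ ℝ^M : wᵢ ≥ 0 for all i, Σᵢ wᵢ = 1}, then det G(w*) > 0 and the support of w* has cardinality at least N: card{i : w*ᵢ > 0} ≥ N. -/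
open Matrix

theorem stmt_19 (M N : ℕ) (hN : 0 < N) (hMN : N ≤ M)
    (V : Matrix (Fin M) (Fin N) ℝ) (hV : V.rank = N)
    (G : (Fin M → ℝ) → Matrix (Fin N) (Fin N) ℝ)
    (hG : ∀ w, G w = Vᵀ * diagonal w * V)
    (w₀ : Fin M → ℝ)
    (hmem : w₀ ∈ {w : Fin M → ℝ | (∀ i, 0 ≤ w i) ∧ ∑ i, w i = 1})
    (hmax : IsMaxOn (fun w => (G w).det)
      {w : Fin M → ℝ | (∀ i, 0 ≤ w i) ∧ ∑ i, w i = 1} w₀) :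
    0 < (G w₀).det ∧
      N ≤ (Finset.univ.filter fun i => 0 < w₀ i).card := by
  have hM : 0 < M := lt_of_lt_of_le hN hMN
  -- V has injective mulVec
  have hker : LinearMap.ker V.mulVecLin = ⊥ := by
    have h1 := LinearMap.finrank_range_add_finrank_ker V.mulVecLin
    rw [Matrix.rank] at hV
    have : Module.finrank ℝ (LinearMap.ker V.mulVecLin) = 0 := by
      rw [hV, Module.finrank_fintype_fun_eq_card, Fintype.card_fin] at h1
      omega
    exact Submodule.finrank_eq_zero.mp this
  have hinj : ∀ x : Fin N → ℝ, V.mulVec x = 0 → x = 0 := by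
    intro x hx
    have : x ∈ LinearMap.ker V.mulVecLin := hx
    simpa [hker] using this
  -- VᵀV is positive definite
  have hpd : (Vᵀ * V).PosDef := by
    refine Matrix.PosDef.of_dotProduct_mulVec_pos
      (by simpa using Matrix.isHermitian_conjTranspose_mul_self V) fun x hx => ?_
    have hxv : V.mulVec x ≠ 0 := fun h => hx (hinj x h)
    have key : star x ⬝ᵥ (Vᵀ * V) *ᵥ x = (V *ᵥ x) ⬝ᵥ (V *ᵥ x) := by
      rw [← Matrix.mulVec_mulVec, Matrix.dotProduct_mulVec]
      simp [Matrix.vecMul_transpose, star_trivial]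
    rw [key]
    rcases lt_or_eq_of_le (Finset.sum_nonneg fun i _ => mul_self_nonneg ((V *ᵥ x) i)) with h | h
    · exact h
    · exact absurd (dotProduct_self_eq_zero.mp h.symm) hxv
  -- uniform weights
  set u : Fin M → ℝ := fun _ => (M : ℝ)⁻¹ with hu
  have hMpos : (0 : ℝ) < M := by exact_mod_cast hM
  have humem : u ∈ {w : Fin M → ℝ | (∀ i, 0 ≤ w i) ∧ ∑ i, w i = 1} := by
    constructor
    · intro i; positivity
    · simp [hu, Finset.sum_const]
      field_simp
  have hGu : G u = (M : ℝ)⁻¹ • (Vᵀ * V) := by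
    rw [hG]
    have : diagonal u = (M : ℝ)⁻¹ • (1 : Matrix (Fin M) (Fin M) ℝ) := by
      rw [Matrix.smul_one_eq_diagonal]
    rw [this, Matrix.mul_smul, Matrix.smul_mul, Matrix.mul_one]
  have hdetu : 0 < (G u).det := by
    rw [hGu, det_smul]
    have := hpd.det_pos
    have h2 : (0:ℝ) < ((M : ℝ)⁻¹) ^ Fintype.card (Fin N) := by positivity
    exact mul_pos h2 this
  have hdet : 0 < (G w₀).det := lt_of_lt_of_le hdetu (hmax humem)
  refine ⟨hdet, ?_⟩
  -- rank argument
  have hunit : IsUnit (G w₀) := by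
    rw [Matrix.isUnit_iff_isUnit_det]
    exact hdet.ne'.isUnit
  have hrank : (G w₀).rank = N := by
    rw [Matrix.rank_of_isUnit _ hunit, Fintype.card_fin]
  have hle : (G w₀).rank ≤ (diagonal w₀).rank := by
    rw [hG]
    calc (Vᵀ * diagonal w₀ * V).rank ≤ (Vᵀ * diagonal w₀).rank :=
          Matrix.rank_mul_le_left _ _
      _ ≤ (diagonal w₀).rank := Matrix.rank_mul_le_right _ _
  have hdiag : (diagonal w₀).rank = Fintype.card {i // w₀ i ≠ 0} :=
    Matrix.rank_diagonal w₀
  have hcard : Fintype.card {i // w₀ i ≠ 0}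
      = (Finset.univ.filter fun i => 0 < w₀ i).card := by
    rw [Fintype.card_subtype]
    congr 1
    apply Finset.filter_congr
    intro i _
    simp only [ne_eq, eq_iff_iff]
    constructor
    · intro h; exact lt_of_le_of_ne (hmem.1 i) (Ne.symm h)
    · intro h; exact h.ne'
  calc N = (G w₀).rank := hrank.symm
    _ ≤ (diagonal w₀).rank := hle
    _ = _ := by rw [hdiag, hcard]
end
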